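/- arXiv:0904.2562 — 2 statements merged into one kernel-verified Lean document; each statement's English description precedes it below -/
import Mathlib

section
/- The map (I,J) ↦ w_{(I,J)}, defined on the set 𝒮_k of ordered pairs (I,J) of disjoint subsets of {1,…,n} with |I|+|J| = k, is injective and its image is exactly W^{P_k}; in other words, it is a bijection from 𝒮_k onto W^{P_k}. -/
noncomputable section

open Finset

/-- The `i`-th standard basis vector `ε_i` of `ℝ^n` (0-indexed: `eps n i` is `ε_{i+1}`). -/
def eps (n : ℕ) (i : Fin n) : Fin n → ℝ := fun m => if m = i then 1 else 0

/-- The positive roots of type `B_n`: `ε_i - ε_j` and `ε_i + ε_j` for `i < j`, and all `ε_i`. -/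
def PosRoot (n : ℕ) : Set (Fin n → ℝ) :=
  {v | (∃ i j : Fin n, i < j ∧ (v = eps n i - eps n j ∨ v = eps n i + eps n j)) ∨
       (∃ i : Fin n, v = eps n i)}

/-- The negative roots of type `B_n`. -/
def NegRoot (n : ℕ) : Set (Fin n → ℝ) := {v | -v ∈ PosRoot n}

/-- The simple roots: `simpleRoot n l` is `α_{l+1}`, i.e. `ε_{l+1} - ε_{l+2}` if `l+1 < n`
and `ε_n` for the last one. -/
def simpleRoot (n : ℕ) (l : Fin n) : Fin n → ℝ :=
  if h : (l : ℕ) + 1 < n then eps n l - eps n ⟨(l : ℕ) + 1, h⟩ else eps n l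

/-- The number of elements of `S` smaller than `x` (the 0-based rank of `x` in `S`). -/
def rk {n : ℕ} (S : Finset (Fin n)) (x : Fin n) : ℕ := (S.filter (fun y => y < x)).card

/-- The `l`-th element (0-indexed) of `S` in increasing order. -/
def elt {n : ℕ} (S : Finset (Fin n)) (l : ℕ) (h : l < S.card) : Fin n :=
  (S.orderIsoOfFin rfl ⟨l, h⟩).1

/-- The sign `η_x` attached to the pair `(I, J)`: `-1` on `I` and `1` elsewhere. -/
def sgn {n : ℕ} (I : Finset (Fin n)) (x : Fin n) : ℝ := if x ∈ I then -1 else 1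

/-- The 0-based index of the coordinate to which `w_{(I,J)}` sends the `x`-th coordinate:
`i_l ↦ k+1-l`, `j_l ↦ l`, `r_l ↦ k+l` (in the 1-based numbering of the paper). -/
def tgt {n : ℕ} (k : ℕ) (I J : Finset (Fin n)) (x : Fin n) : ℕ :=
  if x ∈ I then k - 1 - rk I x
  else if x ∈ J then rk J x
  else k + rk ((I ∪ J)ᶜ) x

/-- The Kostant representative `w_{(I,J)}` as a linear map on `ℝ^n`, determined by
`w(ε_{i_l}) = -ε_{k+1-l}`, `w(ε_{j_l}) = ε_l`, `w(ε_{r_l}) = ε_{k+l}`. -/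
def wIJ {n : ℕ} (k : ℕ) (I J : Finset (Fin n)) (v : Fin n → ℝ) : Fin n → ℝ :=
  fun m => ∑ x : Fin n, (if tgt k I J x = (m : ℕ) then sgn I x * v x else 0)

/-- The inverse of `w_{(I,J)}`. -/
def wIJinv {n : ℕ} (k : ℕ) (I J : Finset (Fin n)) (v : Fin n → ℝ) : Fin n → ℝ :=
  fun x => sgn I x * ∑ m : Fin n, (if tgt k I J x = (m : ℕ) then v m else 0)

/-- The Weyl group of type `B_n`, realized as the group of linear automorphisms permuting
the basis vectors up to signs. -/
def WeylB (n : ℕ) : Set ((Fin n → ℝ) ≃ₗ[ℝ] (Fin n → ℝ)) :=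
  {w | ∃ (σ : Equiv.Perm (Fin n)) (η : Fin n → ℝ),
    (∀ i, η i = 1 ∨ η i = -1) ∧ ∀ i, w (eps n i) = η i • eps n (σ i)}

/-- The set `W^{P_k}` of Kostant representatives: `w ∈ W` such that `w⁻¹(α_l)` is a
positive root for all `l ≠ k` (1-based `l`). -/
def WP (n k : ℕ) : Set ((Fin n → ℝ) ≃ₗ[ℝ] (Fin n → ℝ)) :=
  {w | w ∈ WeylB n ∧ ∀ l : Fin n, (l : ℕ) + 1 ≠ k → w.symm (simpleRoot n l) ∈ PosRoot n}

/-- The length of `w`: the number of positive roots mapped by `w` to negative roots. -/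
def len {n : ℕ} (w : (Fin n → ℝ) → (Fin n → ℝ)) : ℕ :=
  Set.ncard {β | β ∈ PosRoot n ∧ w β ∈ NegRoot n}

/-- `m = max({l ∈ {1,…,𝕛} : j_l < i for all i ∈ I} ∪ {0})`. -/
def mIJ {n : ℕ} (I J : Finset (Fin n)) : ℕ :=
  (insert 0 ((Finset.Icc 1 J.card).filter
    (fun l => ∃ x ∈ J, rk J x + 1 = l ∧ ∀ i ∈ I, x < i))).max' (insert_nonempty _ _)

/-- `ρ = Σ_i (n - i + 1/2) ε_i` (1-based `i`). -/
def rho (n : ℕ) : Fin n → ℝ := fun i => (n : ℝ) - ((i : ℕ) + 1) + 1 / 2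

/-- The vector `λ + ρ` in `ℝ^n`. -/
def lamRho (n : ℕ) (lam : Fin n → ℤ) : Fin n → ℝ := fun i => (lam i : ℝ) + rho n i

/-- `t_{(I,J)} = Σ_l (λ_{i_l} - i_l) - Σ_l (λ_{j_l} - j_l) + (𝕚 - 𝕛)(n + 1/2)`. -/
def tIJ {n : ℕ} (lam : Fin n → ℤ) (I J : Finset (Fin n)) : ℝ :=
  (∑ l : Fin I.card,
    ((lam (elt I (l : ℕ) l.isLt) : ℝ) - (((elt I (l : ℕ) l.isLt : Fin n) : ℕ) + 1)))
  - (∑ l : Fin J.card,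
    ((lam (elt J (l : ℕ) l.isLt) : ℝ) - (((elt J (l : ℕ) l.isLt : Fin n) : ℕ) + 1)))
  + ((I.card : ℝ) - (J.card : ℝ)) * ((n : ℝ) + 1 / 2)

/-- `c`: the arithmetic mean of the first `k` coordinates of `w_{(I,J)}(λ+ρ) - ρ`. -/
def cIJ {n : ℕ} (k : ℕ) (lam : Fin n → ℤ) (I J : Finset (Fin n)) : ℝ :=
  (∑ m ∈ Finset.univ.filter (fun m : Fin n => (m : ℕ) < k),
    (wIJ k I J (lamRho n lam) m - rho n m)) / (k : ℝ)

/-- `μ_{(I,J)} = w_{(I,J)}(λ+ρ) - ρ - c·(ε_1 + … + ε_k)`. -/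
def muIJ {n : ℕ} (k : ℕ) (lam : Fin n → ℤ) (I J : Finset (Fin n)) : Fin n → ℝ :=
  fun m => wIJ k I J (lamRho n lam) m - rho n m -
    cIJ k lam I J * (∑ i ∈ Finset.univ.filter (fun i : Fin n => (i : ℕ) < k), eps n i) m

/-- `(I,J)` is self-dual: the `l`-th coordinate of `μ_{(I,J)}` is the negative of its
`(k+1-l)`-th coordinate for all `1 ≤ l ≤ k`. -/
def SelfDual {n : ℕ} (k : ℕ) (lam : Fin n → ℤ) (I J : Finset (Fin n)) : Prop :=
  ∀ (l : ℕ) (_ : 1 ≤ l) (_ : l ≤ k) (h1 : l - 1 < n) (h2 : k - l < n),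
    muIJ k lam I J ⟨l - 1, h1⟩ = - muIJ k lam I J ⟨k - l, h2⟩

/-- The set `𝒮_k` of ordered pairs `(I,J)` of disjoint subsets with `|I| + |J| = k`. -/
def SIJ (n k : ℕ) : Set (Finset (Fin n) × Finset (Fin n)) :=
  {p | Disjoint p.1 p.2 ∧ p.1.card + p.2.card = k}

namespace KRB
variable {n : ℕ}

lemma sgn_sq (I : Finset (Fin n)) (x : Fin n) : sgn I x * sgn I x = 1 := by
  unfold sgn; split <;> norm_num

lemma sgn_cases (I : Finset (Fin n)) (x : Fin n) : sgn I x = 1 ∨ sgn I x = -1 := by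
  unfold sgn; split <;> simp

lemma sgn_of_mem {I : Finset (Fin n)} {x : Fin n} (h : x ∈ I) : sgn I x = -1 := by
  simp [sgn, h]

lemma sgn_of_not_mem {I : Finset (Fin n)} {x : Fin n} (h : x ∉ I) : sgn I x = 1 := by
  simp [sgn, h]

lemma rk_lt_card {S : Finset (Fin n)} {x : Fin n} (hx : x ∈ S) : rk S x < S.card := by
  apply Finset.card_lt_card
  rw [Finset.ssubset_iff_of_subset (Finset.filter_subset _ _)]
  exact ⟨x, hx, by simp⟩

lemma rk_lt_of_lt {S : Finset (Fin n)} {x y : Fin n} (hx : x ∈ S) (h : x < y) :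
    rk S x < rk S y := by
  apply Finset.card_lt_card
  have hsub : S.filter (fun z => z < x) ⊆ S.filter (fun z => z < y) := by
    intro z hz; simp only [Finset.mem_filter] at hz ⊢; exact ⟨hz.1, lt_trans hz.2 h⟩
  exact (Finset.ssubset_iff_of_subset hsub).mpr ⟨x, by simp [hx, h], by simp⟩

lemma lt_of_rk_lt {S : Finset (Fin n)} {x y : Fin n} (hy : y ∈ S) (h : rk S x < rk S y) :
    x < y := by
  rcases lt_trichotomy x y with h1 | h1 | h1
  · exact h1
  · subst h1; omega
  · have := rk_lt_of_lt hy h1; omega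

lemma rk_injOn {S : Finset (Fin n)} {x y : Fin n} (hx : x ∈ S) (hy : y ∈ S)
    (h : rk S x = rk S y) : x = y := by
  rcases lt_trichotomy x y with h1 | h1 | h1
  · exact absurd (rk_lt_of_lt hx h1) (by omega)
  · exact h1
  · exact absurd (rk_lt_of_lt hy h1) (by omega)

lemma card_filter_lt_val (m : ℕ) (hm : m ≤ n) :
    (univ.filter (fun p : Fin n => (p : ℕ) < m)).card = m := by
  have h2 : (univ.filter (fun p : Fin n => (p : ℕ) < m)).card = (Finset.range m).card := by
    refine Finset.card_bij (fun p _ => (p : ℕ)) ?_ ?_ ?_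
    · intro a ha; simp only [mem_filter, mem_univ, true_and] at ha; simpa using ha
    · intro a _ b _ h; exact Fin.val_injective h
    · intro b hb; simp only [Finset.mem_range] at hb
      exact ⟨⟨b, lt_of_lt_of_le hb hm⟩, by simp [hb], rfl⟩
  rw [h2, Finset.card_range]

lemma card_filter_Ico_val (a b : ℕ) (hb : b ≤ n) :
    (univ.filter (fun p : Fin n => a ≤ (p : ℕ) ∧ (p : ℕ) < b)).card = b - a := by
  have h2 : (univ.filter (fun p : Fin n => a ≤ (p : ℕ) ∧ (p : ℕ) < b)).card
      = (Finset.Ico a b).card := by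
    refine Finset.card_bij (fun p _ => (p : ℕ)) ?_ ?_ ?_
    · intro p hp; simp only [mem_filter, mem_univ, true_and] at hp; simp [Finset.mem_Ico, hp]
    · intro p _ q _ h; exact Fin.val_injective h
    · intro q hq; simp only [Finset.mem_Ico] at hq
      exact ⟨⟨q, lt_of_lt_of_le hq.2 hb⟩, by simp [hq.1, hq.2], rfl⟩
  rw [h2, Nat.card_Ico]

lemma card_filter_perm (σ : Equiv.Perm (Fin n)) (P : Fin n → Prop) [DecidablePred P] :
    (univ.filter (fun y => P (σ y))).card = (univ.filter P).card := by
  refine Finset.card_bij (fun y _ => σ y) ?_ ?_ ?_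
  · intro y hy; simp only [mem_filter, mem_univ, true_and] at hy ⊢; exact hy
  · intro a _ b _ h; exact σ.injective h
  · intro b hb; simp only [mem_filter, mem_univ, true_and] at hb
    exact ⟨σ.symm b, by simpa using hb, by simp⟩

variable {k : ℕ} {I J : Finset (Fin n)}

lemma card_compl_union (hd : Disjoint I J) : ((I ∪ J)ᶜ).card = n - (I.card + J.card) := by
  rw [Finset.card_compl, Finset.card_union_of_disjoint hd]
  simp

lemma tgt_spec (hc : I.card + J.card = k) (x : Fin n) :
    (x ∈ I ∧ tgt k I J x = k - 1 - rk I x ∧ J.card ≤ tgt k I J x ∧ tgt k I J x < k) ∨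
    (x ∈ J ∧ x ∉ I ∧ tgt k I J x = rk J x ∧ tgt k I J x < J.card) ∨
    (x ∉ I ∧ x ∉ J ∧ tgt k I J x = k + rk ((I ∪ J)ᶜ) x ∧ k ≤ tgt k I J x) := by
  unfold tgt
  by_cases hI : x ∈ I
  · left
    have h1 := rk_lt_card hI
    refine ⟨hI, by rw [if_pos hI], ?_, ?_⟩ <;> rw [if_pos hI] <;> omega
  · by_cases hJ : x ∈ J
    · right; left
      have h1 := rk_lt_card hJ
      exact ⟨hJ, hI, by rw [if_neg hI, if_pos hJ], by rw [if_neg hI, if_pos hJ]; omega⟩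
    · right; right
      exact ⟨hI, hJ, by rw [if_neg hI, if_neg hJ], by rw [if_neg hI, if_neg hJ]; omega⟩

lemma tgt_lt (hd : Disjoint I J) (hc : I.card + J.card = k) (hkn : k ≤ n) (x : Fin n) :
    tgt k I J x < n := by
  rcases tgt_spec hc x with ⟨_, _, _, h⟩ | ⟨_, _, _, h⟩ | ⟨hI, hJ, h, _⟩
  · omega
  · omega
  · have h1 : x ∈ (I ∪ J)ᶜ := by simp [hI, hJ]
    have h2 := rk_lt_card h1
    have h3 := card_compl_union (n := n) hd
    have h4 := x.isLt
    omega

lemma mem_J_of_tgt_lt (hc : I.card + J.card = k) {x : Fin n} (h : tgt k I J x < J.card) :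
    x ∈ J := by
  rcases tgt_spec hc x with ⟨_, _, h1, _⟩ | ⟨hJ, _, _, _⟩ | ⟨_, _, _, h1⟩
  · omega
  · exact hJ
  · omega

lemma mem_I_of_tgt (hc : I.card + J.card = k) {x : Fin n} (h1 : J.card ≤ tgt k I J x)
    (h2 : tgt k I J x < k) : x ∈ I := by
  rcases tgt_spec hc x with ⟨hI, _, _, _⟩ | ⟨_, _, _, h3⟩ | ⟨_, _, _, h3⟩
  · exact hI
  · omega
  · omega

lemma not_mem_of_tgt (hc : I.card + J.card = k) {x : Fin n} (h : k ≤ tgt k I J x) :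
    x ∉ I ∧ x ∉ J := by
  rcases tgt_spec hc x with ⟨_, _, _, h1⟩ | ⟨_, _, _, h1⟩ | ⟨hI, hJ, _, _⟩
  · omega
  · omega
  · exact ⟨hI, hJ⟩

lemma tgt_inj (hc : I.card + J.card = k) {x y : Fin n}
    (h : tgt k I J x = tgt k I J y) : x = y := by
  rcases tgt_spec hc x with ⟨hx, ex, bx1, bx2⟩ | ⟨hx, hx', ex, bx⟩ | ⟨hx, hx', ex, bx⟩ <;>
    rcases tgt_spec hc y with ⟨hy, ey, by1, by2⟩ | ⟨hy, hy', ey, byy⟩ | ⟨hy, hy', ey, byy⟩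
  · have r1 := rk_lt_card hx
    have r2 := rk_lt_card hy
    exact rk_injOn hx hy (by omega)
  · omega
  · omega
  · omega
  · exact rk_injOn hx hy (by omega)
  · omega
  · omega
  · omega
  · have cx : x ∈ (I ∪ J)ᶜ := by simp [hx, hx']
    have cy : y ∈ (I ∪ J)ᶜ := by simp [hy, hy']
    exact rk_injOn cx cy (by omega)

lemma wIJ_apply_eps (k : ℕ) (I J : Finset (Fin n)) (x m : Fin n) :
    wIJ k I J (eps n x) m = if tgt k I J x = (m : ℕ) then sgn I x else 0 := by
  unfold wIJ
  rw [Finset.sum_eq_single x]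
  · simp [eps]
  · intro y _ hy; simp [eps, hy]
  · intro h; exact absurd (Finset.mem_univ x) h

lemma wIJ_eq_fun (σ : Equiv.Perm (Fin n)) (htgt : ∀ x, tgt k I J x = (σ x : ℕ)) :
    wIJ k I J = fun v m => sgn I (σ.symm m) * v (σ.symm m) := by
  funext v m
  unfold wIJ
  rw [Finset.sum_eq_single (σ.symm m)]
  · rw [htgt, if_pos (by rw [Equiv.apply_symm_apply])]
  · intro y _ hy
    rw [htgt, if_neg]
    intro hh
    have h2 : σ y = m := Fin.val_injective hh
    exact hy (by rw [← h2, Equiv.symm_apply_apply])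
  · intro h; exact absurd (Finset.mem_univ _) h

def spe (σ : Equiv.Perm (Fin n)) (η : Fin n → ℝ) (hη : ∀ x, η x * η x = 1) :
    (Fin n → ℝ) ≃ₗ[ℝ] (Fin n → ℝ) where
  toFun v := fun m => η (σ.symm m) * v (σ.symm m)
  map_add' u v := by funext m; simp [mul_add]
  map_smul' c v := by funext m; simp; ring
  invFun v := fun x => η x * v (σ x)
  left_inv v := by
    funext x
    simp only [Equiv.symm_apply_apply]
    rw [← mul_assoc, hη, one_mul]
  right_inv v := by
    funext m
    simp only [Equiv.apply_symm_apply]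
    rw [← mul_assoc, hη, one_mul]

lemma spe_apply (σ : Equiv.Perm (Fin n)) (η : Fin n → ℝ) (hη : ∀ x, η x * η x = 1)
    (v : Fin n → ℝ) : spe σ η hη v = fun m => η (σ.symm m) * v (σ.symm m) := rfl

lemma spe_symm_apply (σ : Equiv.Perm (Fin n)) (η : Fin n → ℝ) (hη : ∀ x, η x * η x = 1)
    (v : Fin n → ℝ) : (spe σ η hη).symm v = fun x => η x * v (σ x) := rfl

lemma spe_apply_eps (σ : Equiv.Perm (Fin n)) (η : Fin n → ℝ) (hη : ∀ x, η x * η x = 1)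
    (i : Fin n) : spe σ η hη (eps n i) = η i • eps n (σ i) := by
  funext m
  rw [spe_apply]
  simp only [Pi.smul_apply, smul_eq_mul, eps]
  by_cases hm : m = σ i
  · subst hm; simp
  · rw [if_neg (fun h => hm (by rw [← Equiv.apply_symm_apply σ m, h])), if_neg hm]
    ring

lemma spe_symm_eps (σ : Equiv.Perm (Fin n)) (η : Fin n → ℝ) (hη : ∀ x, η x * η x = 1)
    (m : Fin n) : (spe σ η hη).symm (eps n m) = η (σ.symm m) • eps n (σ.symm m) := by
  funext x
  rw [spe_symm_apply]
  simp only [Pi.smul_apply, smul_eq_mul, eps]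
  by_cases hx : x = σ.symm m
  · subst hx; simp
  · rw [if_neg (fun h => hx (by rw [← Equiv.symm_apply_apply σ x, h])), if_neg hx]
    ring

lemma eps_eq_single (i : Fin n) : eps n i = Pi.single i 1 := by
  funext m
  simp [eps, Pi.single_apply]

lemma linear_eq_of_eps {f g : (Fin n → ℝ) →ₗ[ℝ] (Fin n → ℝ)}
    (h : ∀ i, f (eps n i) = g (eps n i)) : f = g := by
  apply Module.Basis.ext (Pi.basisFun ℝ (Fin n))
  intro i
  have := h i
  rwa [eps_eq_single, ← Pi.basisFun_apply] at this

lemma ite_diff {P Q : Prop} [Decidable P] [Decidable Q] {r : ℝ} (hr : r = 1 ∨ r = -1)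
    (h : r = (if P then (1:ℝ) else 0) - (if Q then (1:ℝ) else 0)) :
    (r = 1 ∧ P ∧ ¬Q) ∨ (r = -1 ∧ ¬P ∧ Q) := by
  split_ifs at h <;> rcases hr with hr | hr <;> subst hr <;> (try norm_num at h) <;> (try norm_num) <;> tauto

lemma ite_sum {P Q : Prop} [Decidable P] [Decidable Q] {r : ℝ} (hPQ : ¬(P ∧ Q))
    (hr : r = 1 ∨ r = -1)
    (h : r = (if P then (1:ℝ) else 0) + (if Q then (1:ℝ) else 0)) :
    r = 1 ∧ (P ∨ Q) := by
  split_ifs at h <;> rcases hr with hr | hr <;> subst hr <;> (try norm_num at h) <;> (try norm_num) <;> tauto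

lemma ite_one {P : Prop} [Decidable P] {r : ℝ} (hr : r = 1 ∨ r = -1)
    (h : r = (if P then (1:ℝ) else 0)) : r = 1 ∧ P := by
  split_ifs at h <;> rcases hr with hr | hr <;> subst hr <;> (try norm_num at h) <;> (try norm_num) <;> tauto

lemma pair_eval {a b : Fin n} {sa sb : ℝ} (z : Fin n) :
    (sa • eps n a - sb • eps n b) z
      = sa * (if z = a then 1 else 0) - sb * (if z = b then 1 else 0) := by
  simp [eps]

lemma posroot_pair {a b : Fin n} {sa sb : ℝ} (hab : a ≠ b)
    (hsa : sa = 1 ∨ sa = -1) (hsb : sb = 1 ∨ sb = -1)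
    (h : sa • eps n a - sb • eps n b ∈ PosRoot n) :
    (sa = 1 ∧ sb = 1 ∧ a < b) ∨ (sa = -1 ∧ sb = -1 ∧ b < a) ∨ (sa = 1 ∧ sb = -1) := by
  have hsb' : -sb = 1 ∨ -sb = -1 := by rcases hsb with h' | h' <;> rw [h'] <;> norm_num
  rcases h with ⟨i, j, hij, hv | hv⟩ | ⟨i, hv⟩
  · have ea : sa = (if a = i then (1:ℝ) else 0) - (if a = j then (1:ℝ) else 0) := by
      have := congrFun hv a
      rw [pair_eval] at this
      rw [if_pos rfl, if_neg hab] at this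
      simpa [eps] using this
    have eb : -sb = (if b = i then (1:ℝ) else 0) - (if b = j then (1:ℝ) else 0) := by
      have := congrFun hv b
      rw [pair_eval] at this
      rw [if_pos rfl, if_neg (Ne.symm hab)] at this
      simp only [eps, Pi.sub_apply] at this
      linarith [this]
    rcases ite_diff hsa ea with ⟨h1, h2, h3⟩ | ⟨h1, h2, h3⟩ <;>
      rcases ite_diff hsb' eb with ⟨g1, g2, g3⟩ | ⟨g1, g2, g3⟩
    · exact absurd (h2.trans g2.symm) hab
    · left
      refine ⟨h1, by linarith, ?_⟩
      rw [h2, g3]; exact hij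
    · right; left
      refine ⟨h1, by linarith, ?_⟩
      rw [g2, h3]; exact hij
    · exact absurd (h3.trans g3.symm) hab
  · have ea : sa = (if a = i then (1:ℝ) else 0) + (if a = j then (1:ℝ) else 0) := by
      have := congrFun hv a
      rw [pair_eval] at this
      rw [if_pos rfl, if_neg hab] at this
      simpa [eps] using this
    have eb : -sb = (if b = i then (1:ℝ) else 0) + (if b = j then (1:ℝ) else 0) := by
      have := congrFun hv b
      rw [pair_eval] at this
      rw [if_pos rfl, if_neg (Ne.symm hab)] at this
      simp only [eps, Pi.add_apply] at this
      linarith [this]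
    have h1 := ite_sum (fun hu => hij.ne (hu.1.symm.trans hu.2)) hsa ea
    have h2 := ite_sum (fun hu => hij.ne (hu.1.symm.trans hu.2)) hsb' eb
    right; right
    exact ⟨h1.1, by linarith [h2.1]⟩
  · have ea : sa = (if a = i then (1:ℝ) else 0) := by
      have := congrFun hv a
      rw [pair_eval] at this
      rw [if_pos rfl, if_neg hab] at this
      simpa [eps] using this
    have eb : -sb = (if b = i then (1:ℝ) else 0) := by
      have := congrFun hv b
      rw [pair_eval] at this
      rw [if_pos rfl, if_neg (Ne.symm hab)] at this
      simp only [eps] at this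
      linarith [this]
    have h1 := ite_one hsa ea
    have h2 := ite_one hsb' eb
    exact absurd (h1.2.trans h2.2.symm) hab

lemma tgt_of_mem_I {k : ℕ} {I J : Finset (Fin n)} {x : Fin n} (hx : x ∈ I) :
    tgt k I J x = k - 1 - rk I x := by unfold tgt; rw [if_pos hx]

lemma tgt_of_mem_J {k : ℕ} {I J : Finset (Fin n)} {x : Fin n} (hd : Disjoint I J)
    (hx : x ∈ J) : tgt k I J x = rk J x := by
  unfold tgt; rw [if_neg (Finset.disjoint_right.mp hd hx), if_pos hx]

lemma tgt_of_not_mem {k : ℕ} {I J : Finset (Fin n)} {x : Fin n} (hI : x ∉ I) (hJ : x ∉ J) :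
    tgt k I J x = k + rk ((I ∪ J)ᶜ) x := by
  unfold tgt; rw [if_neg hI, if_neg hJ]

lemma comb_pp (u v : Fin n → ℝ) : (1:ℝ) • u - (1:ℝ) • v = u - v := by
  rw [one_smul, one_smul]

lemma comb_mm (u v : Fin n → ℝ) : (-1:ℝ) • u - (-1:ℝ) • v = v - u := by
  rw [neg_one_smul, neg_one_smul]; abel

lemma comb_pm (u v : Fin n → ℝ) : (1:ℝ) • u - (-1:ℝ) • v = u + v := by
  rw [one_smul, neg_one_smul, sub_neg_eq_add]

lemma fwd {k : ℕ} {I J : Finset (Fin n)} (hd : Disjoint I J) (hc : I.card + J.card = k)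
    (hk1 : 1 ≤ k) (hkn : k ≤ n) :
    ∃ w : (Fin n → ℝ) ≃ₗ[ℝ] (Fin n → ℝ), w ∈ WP n k ∧ ⇑w = wIJ k I J := by
  have hbij : Function.Bijective
      (fun x : Fin n => (⟨tgt k I J x, tgt_lt hd hc hkn x⟩ : Fin n)) := by
    apply Finite.injective_iff_bijective.mp
    intro x y h
    exact tgt_inj hc (congrArg Fin.val h)
  set τ : Equiv.Perm (Fin n) := Equiv.ofBijective _ hbij with hτ
  have htgt : ∀ x, tgt k I J x = (τ x : ℕ) := fun x => rfl
  have key : ∀ m : Fin n, tgt k I J (τ.symm m) = (m : ℕ) := fun m => by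
    rw [htgt, Equiv.apply_symm_apply]
  refine ⟨spe τ (sgn I) (sgn_sq I),
    ⟨⟨τ, sgn I, fun i => sgn_cases I i, fun i => spe_apply_eps τ (sgn I) (sgn_sq I) i⟩, ?_⟩,
    by rw [wIJ_eq_fun τ htgt]; rfl⟩
  intro l hl
  have hcJk : J.card ≤ k := by omega
  by_cases hln : (l : ℕ) + 1 < n
  · simp only [simpleRoot, dif_pos hln]
    set x := τ.symm l with hx
    set y := τ.symm (⟨(l : ℕ) + 1, hln⟩ : Fin n) with hy
    have px : tgt k I J x = (l : ℕ) := key l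
    have py : tgt k I J y = (l : ℕ) + 1 := key _
    have hxy : x ≠ y := by
      intro h
      have := px ▸ py ▸ congrArg (tgt k I J) h
      omega
    rw [map_sub, spe_symm_eps, spe_symm_eps, ← hx, ← hy]
    have hcase : ((l : ℕ) + 1 < J.card) ∨ ((l : ℕ) + 1 = J.card) ∨
        (J.card ≤ (l : ℕ) ∧ (l : ℕ) + 1 < k) ∨ (k ≤ (l : ℕ)) := by omega
    rcases hcase with hco | hco | ⟨hco1, hco2⟩ | hco
    · -- both in J
      have hxJ : x ∈ J := mem_J_of_tgt_lt hc (by omega)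
      have hyJ : y ∈ J := mem_J_of_tgt_lt hc (by omega)
      have hxI : x ∉ I := Finset.disjoint_right.mp hd hxJ
      have hyI : y ∉ I := Finset.disjoint_right.mp hd hyJ
      have rx := tgt_of_mem_J (k := k) hd hxJ
      have ry := tgt_of_mem_J (k := k) hd hyJ
      have hlt : x < y := lt_of_rk_lt hyJ (by omega)
      rw [sgn_of_not_mem hxI, sgn_of_not_mem hyI, comb_pp]
      exact Or.inl ⟨x, y, hlt, Or.inl rfl⟩
    · -- x in J, y in I
      have hxJ : x ∈ J := mem_J_of_tgt_lt hc (by omega)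
      have hyI : y ∈ I := mem_I_of_tgt hc (by omega) (by omega)
      have hxI : x ∉ I := Finset.disjoint_right.mp hd hxJ
      rw [sgn_of_not_mem hxI, sgn_of_mem hyI, comb_pm]
      rcases lt_or_gt_of_ne hxy with h | h
      · exact Or.inl ⟨x, y, h, Or.inr rfl⟩
      · exact Or.inl ⟨y, x, h, Or.inr (add_comm _ _)⟩
    · -- both in I
      have hxI : x ∈ I := mem_I_of_tgt hc (by omega) (by omega)
      have hyI : y ∈ I := mem_I_of_tgt hc (by omega) (by omega)
      have rx := tgt_of_mem_I (k := k) (J := J) hxI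
      have ry := tgt_of_mem_I (k := k) (J := J) hyI
      have bx := rk_lt_card hxI
      have byy := rk_lt_card hyI
      have hlt : y < x := lt_of_rk_lt hxI (by omega)
      rw [sgn_of_mem hxI, sgn_of_mem hyI, comb_mm]
      exact Or.inl ⟨y, x, hlt, Or.inl rfl⟩
    · -- both in complement
      have hx' := not_mem_of_tgt hc (by omega : k ≤ tgt k I J x)
      have hy' := not_mem_of_tgt hc (by omega : k ≤ tgt k I J y)
      have cx : x ∈ (I ∪ J)ᶜ := by simp [hx'.1, hx'.2]
      have cy : y ∈ (I ∪ J)ᶜ := by simp [hy'.1, hy'.2]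
      have rx := tgt_of_not_mem (k := k) hx'.1 hx'.2
      have ry := tgt_of_not_mem (k := k) hy'.1 hy'.2
      have hlt : x < y := lt_of_rk_lt cy (by omega)
      rw [sgn_of_not_mem hx'.1, sgn_of_not_mem hy'.1, comb_pp]
      exact Or.inl ⟨x, y, hlt, Or.inl rfl⟩
  · simp only [simpleRoot, dif_neg hln]
    have hln' : (l : ℕ) + 1 = n := by have := l.isLt; omega
    set x := τ.symm l with hx
    have px : tgt k I J x = (l : ℕ) := key l
    have hx' := not_mem_of_tgt hc (by omega : k ≤ tgt k I J x)
    rw [spe_symm_eps, ← hx, sgn_of_not_mem hx'.1, one_smul]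
    exact Or.inr ⟨x, rfl⟩

lemma sgn_ne_zero (I : Finset (Fin n)) (x : Fin n) : sgn I x ≠ 0 := by
  rcases sgn_cases I x with h | h <;> rw [h] <;> norm_num

lemma mem_J_iff {k : ℕ} {I J : Finset (Fin n)} (hd : Disjoint I J)
    (hc : I.card + J.card = k) {x : Fin n} :
    x ∈ J ↔ (x ∉ I ∧ tgt k I J x < k) := by
  constructor
  · intro hx
    refine ⟨Finset.disjoint_right.mp hd hx, ?_⟩
    rw [tgt_of_mem_J hd hx]
    have := rk_lt_card hx
    omega
  · rintro ⟨hI, hlt⟩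
    by_contra hJ
    rw [tgt_of_not_mem hI hJ] at hlt
    omega

lemma inj {k : ℕ} {I1 J1 I2 J2 : Finset (Fin n)} (hd1 : Disjoint I1 J1)
    (hc1 : I1.card + J1.card = k) (hd2 : Disjoint I2 J2) (hc2 : I2.card + J2.card = k)
    (hkn : k ≤ n) (h : wIJ k I1 J1 = wIJ k I2 J2) : I1 = I2 ∧ J1 = J2 := by
  have main : ∀ x : Fin n, (x ∈ I1 ↔ x ∈ I2) ∧ tgt k I1 J1 x = tgt k I2 J2 x := by
    intro x
    have h1 := congrFun (congrFun h (eps n x)) ⟨tgt k I1 J1 x, tgt_lt hd1 hc1 hkn x⟩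
    rw [wIJ_apply_eps, wIJ_apply_eps, if_pos rfl] at h1
    by_cases ht : tgt k I2 J2 x = tgt k I1 J1 x
    · rw [if_pos ht] at h1
      refine ⟨?_, ht.symm⟩
      constructor <;> intro hm
      · by_contra hm2
        rw [sgn_of_mem hm, sgn_of_not_mem hm2] at h1
        norm_num at h1
      · by_contra hm2
        rw [sgn_of_not_mem hm2, sgn_of_mem hm] at h1
        norm_num at h1
    · rw [if_neg ht] at h1
      exact absurd h1 (sgn_ne_zero I1 x)
  have hI : I1 = I2 := Finset.ext fun x => (main x).1
  refine ⟨hI, Finset.ext fun x => ?_⟩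
  rw [mem_J_iff hd1 hc1, mem_J_iff hd2 hc2, (main x).1, (main x).2]

def Xfun {n : ℕ} (σ : Equiv.Perm (Fin n)) (hnz : 0 < n) (p : ℕ) : Fin n :=
  if hp : p < n then σ.symm ⟨p, hp⟩ else ⟨0, hnz⟩

lemma Xfun_val {n : ℕ} (σ : Equiv.Perm (Fin n)) (hnz : 0 < n) {p : ℕ} (hp : p < n) :
    Xfun σ hnz p = σ.symm ⟨p, hp⟩ := dif_pos hp

lemma Xfun_sigma {n : ℕ} (σ : Equiv.Perm (Fin n)) (hnz : 0 < n) (u : Fin n) :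
    Xfun σ hnz ((σ u : ℕ)) = u := by
  rw [Xfun_val σ hnz (σ u).isLt]
  simp

lemma chain_lt {f : ℕ → Fin n} {a b : ℕ} (hcons : ∀ p, a ≤ p → p + 1 < b → f p < f (p + 1)) :
    ∀ p q, a ≤ p → p < q → q < b → f p < f q := by
  intro p q hap hpq hqb
  have H : ∀ r, p + 1 ≤ r → r < b → f p < f r := by
    intro r hr
    induction r, hr using Nat.le_induction with
    | base => intro hb; exact hcons p hap hb
    | succ r hr ih => intro hb; exact lt_trans (ih (by omega)) (hcons r (by omega) hb)
  exact H q hpq hqb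

lemma chain_gt {f : ℕ → Fin n} {a b : ℕ} (hcons : ∀ p, a ≤ p → p + 1 < b → f (p + 1) < f p) :
    ∀ p q, a ≤ p → p < q → q < b → f q < f p := by
  intro p q hap hpq hqb
  have H : ∀ r, p + 1 ≤ r → r < b → f r < f p := by
    intro r hr
    induction r, hr using Nat.le_induction with
    | base => intro hb; exact hcons p hap hb
    | succ r hr ih => intro hb; exact lt_trans (hcons r (by omega) hb) (ih (by omega))
  exact H q hpq hqb

lemma posroot_single {a : Fin n} {sa : ℝ} (hsa : sa = 1 ∨ sa = -1)
    (h : sa • eps n a ∈ PosRoot n) : sa = 1 := by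
  have hval : ∀ z : Fin n, (sa • eps n a) z = sa * (if z = a then 1 else 0) := by
    intro z; simp [eps]
  rcases h with ⟨i, j, hij, hv | hv⟩ | ⟨i, hv⟩
  · have ei := congrFun hv i
    have ej := congrFun hv j
    rw [hval] at ei ej
    simp only [Pi.sub_apply, eps, if_pos rfl, if_neg hij.ne, if_neg hij.ne'] at ei ej
    split_ifs at ei ej <;> (try norm_num at ei ej) <;> (try norm_num) <;> linarith
  · have ei := congrFun hv i
    have ej := congrFun hv j
    rw [hval] at ei ej
    simp only [Pi.add_apply, eps, if_pos rfl, if_neg hij.ne, if_neg hij.ne'] at ei ej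
    split_ifs at ei ej <;> (try norm_num at ei ej) <;> (try norm_num) <;>
      first
        | linarith
        | (rename_i h1 h2; exact absurd (h1.symm.trans h2) hij.ne)
  · have ei := congrFun hv i
    rw [hval] at ei
    simp only [eps, if_pos rfl] at ei
    split_ifs at ei <;> (try norm_num at ei) <;> (try norm_num)
    exact ei

lemma bwd (hn : 3 ≤ n) {k : ℕ} (hk1 : 1 ≤ k) (hkn : k ≤ n)
    (w : (Fin n → ℝ) ≃ₗ[ℝ] (Fin n → ℝ)) (hw : w ∈ WP n k) :
    ∃ I J : Finset (Fin n), Disjoint I J ∧ I.card + J.card = k ∧ wIJ k I J = ⇑w := by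
  classical
  obtain ⟨⟨σ, η, hη, hweps⟩, hpos⟩ := hw
  have hη2 : ∀ x, η x * η x = 1 := by
    intro x; rcases hη x with h | h <;> rw [h] <;> norm_num
  have hnz : (0:ℕ) < n := by omega
  set X : ℕ → Fin n := Xfun σ hnz with hXdef
  -- w.symm on basis vectors
  have hsymm : ∀ m : Fin n, w.symm (eps n m) = η (σ.symm m) • eps n (σ.symm m) := by
    intro m
    have h0 := hweps (σ.symm m)
    rw [Equiv.apply_symm_apply] at h0
    have h1 := congrArg w.symm h0
    rw [LinearEquiv.symm_apply_apply, map_smul] at h1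
    calc w.symm (eps n m) = (η (σ.symm m) * η (σ.symm m)) • w.symm (eps n m) := by
          rw [hη2, one_smul]
      _ = η (σ.symm m) • eps n (σ.symm m) := by rw [mul_smul, ← h1]
  -- local condition from positivity
  have cond : ∀ p : ℕ, p + 1 < n → p + 1 ≠ k →
      (η (X p) = 1 ∧ η (X (p+1)) = 1 ∧ X p < X (p+1)) ∨
      (η (X p) = -1 ∧ η (X (p+1)) = -1 ∧ X (p+1) < X p) ∨
      (η (X p) = 1 ∧ η (X (p+1)) = -1) := by
    intro p hpn hpk
    have hp : p < n := by omega
    have hroot := hpos ⟨p, hp⟩ hpk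
    rw [simpleRoot, dif_pos (show ((⟨p, hp⟩ : Fin n) : ℕ) + 1 < n from hpn),
      map_sub, hsymm, hsymm] at hroot
    have hmem : η (X p) • eps n (X p) - η (X (p+1)) • eps n (X (p+1)) ∈ PosRoot n := by
      rw [hXdef, Xfun_val σ hnz hp, Xfun_val σ hnz hpn]
      exact hroot
    have hab : X p ≠ X (p+1) := by
      intro hcon
      rw [hXdef, Xfun_val σ hnz hp, Xfun_val σ hnz hpn] at hcon
      have h2 := congrArg Fin.val (σ.symm.injective hcon)
      simp only [Fin.mk.injEq] at h2
      omega
    exact posroot_pair hab (hη _) (hη _) hmem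
  -- signs are +1 from position k on
  have g1 : ∀ p, k ≤ p → p < n → η (X p) = 1 := by
    have gd : ∀ d p, k ≤ p → p < n → n - 1 - p ≤ d → η (X p) = 1 := by
      intro d
      induction d with
      | zero =>
        intro p hk2 hp hd
        have hpe : p = n - 1 := by omega
        subst hpe
        have hlast := hpos ⟨n - 1, by omega⟩ (show (n:ℕ) - 1 + 1 ≠ k by omega)
        rw [simpleRoot, dif_neg (show ¬((⟨n - 1, by omega⟩ : Fin n) : ℕ) + 1 < n by
          simp; omega), hsymm] at hlast
        have hres := posroot_single (hη _) hlast
        rw [hXdef, Xfun_val σ hnz (show n - 1 < n by omega)]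
        exact hres
      | succ d ih =>
        intro p hk2 hp hd
        by_cases hle : n - 1 - p ≤ d
        · exact ih p hk2 hp hle
        · have hpn : p + 1 < n := by omega
          have hs1 := ih (p + 1) (by omega) (by omega) (by omega)
          rcases cond p hpn (by omega) with ⟨h1, _, _⟩ | ⟨_, h2, _⟩ | ⟨h1, _⟩
          · exact h1
          · rw [hs1] at h2; norm_num at h2
          · exact h1
    intro p hk2 hp
    exact gd (n - 1 - p) p hk2 hp le_rfl
  -- the threshold jj
  obtain ⟨jj, hjjk, hjjmem, hjjmin⟩ :
      ∃ jj, jj ≤ k ∧ (jj = k ∨ η (X jj) = -1) ∧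
        ∀ p, p < jj → ¬(p = k ∨ η (X p) = -1) := by
    classical
    have hTne : ((Finset.range (k+1)).filter (fun p => p = k ∨ η (X p) = -1)).Nonempty :=
      ⟨k, by simp⟩
    set jj0 := ((Finset.range (k+1)).filter (fun p => p = k ∨ η (X p) = -1)).min' hTne
      with hjj0
    have hmm := Finset.min'_mem _ hTne
    rw [← hjj0] at hmm
    simp only [Finset.mem_filter, Finset.mem_range] at hmm
    have hjj0k : jj0 ≤ k := by omega
    refine ⟨jj0, hjj0k, hmm.2, ?_⟩
    intro p hp hmem
    have hle : jj0 ≤ p := by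
      rw [hjj0]
      exact Finset.min'_le _ p
        (Finset.mem_filter.mpr ⟨Finset.mem_range.mpr (by omega), hmem⟩)
    omega
  have hposlt : ∀ p, p < jj → η (X p) = 1 := by
    intro p hp
    have h2 := hjjmin p hp
    rcases hη (X p) with h | h
    · exact h
    · exact absurd (Or.inr h) h2
  have hneg : ∀ p, jj ≤ p → p < k → η (X p) = -1 := by
    have hbase : jj < k → η (X jj) = -1 := by
      intro hlt
      rcases hjjmem with h | h
      · omega
      · exact h
    intro p hjp
    induction p, hjp using Nat.le_induction with
    | base => intro h; exact hbase h
    | succ p hp ih =>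
      intro h
      have hsp := ih (by omega)
      rcases cond p (by omega) (by omega) with ⟨h1, _, _⟩ | ⟨_, h2, _⟩ | ⟨h1, _⟩
      · rw [hsp] at h1; norm_num at h1
      · exact h2
      · rw [hsp] at h1; norm_num at h1
  -- monotonicity chains
  have chainJ : ∀ p q, p < q → q < jj → X p < X q := by
    have hcons : ∀ p, 0 ≤ p → p + 1 < jj → X p < X (p + 1) := by
      intro p _ hp
      rcases cond p (by omega) (by omega) with ⟨_, _, h3⟩ | ⟨h1, _, _⟩ | ⟨_, h2⟩
      · exact h3
      · rw [hposlt p (by omega)] at h1; norm_num at h1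
      · rw [hposlt (p+1) (by omega)] at h2; norm_num at h2
    intro p q hpq hq
    exact chain_lt hcons p q (by omega) hpq hq
  have chainI : ∀ p q, jj ≤ p → p < q → q < k → X q < X p := by
    have hcons : ∀ p, jj ≤ p → p + 1 < k → X (p + 1) < X p := by
      intro p hp1 hp2
      rcases cond p (by omega) (by omega) with ⟨h1, _, _⟩ | ⟨_, _, h3⟩ | ⟨h1, _⟩
      · rw [hneg p hp1 (by omega)] at h1; norm_num at h1
      · exact h3
      · rw [hneg p hp1 (by omega)] at h1; norm_num at h1
    exact chain_gt hcons
  have chainC : ∀ p q, k ≤ p → p < q → q < n → X p < X q := by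
    have hcons : ∀ p, k ≤ p → p + 1 < n → X p < X (p + 1) := by
      intro p hp1 hp2
      rcases cond p (by omega) (by omega) with ⟨_, _, h3⟩ | ⟨h1, _, _⟩ | ⟨_, h2⟩
      · exact h3
      · rw [g1 p hp1 (by omega)] at h1; norm_num at h1
      · rw [g1 (p+1) (by omega) (by omega)] at h2; norm_num at h2
    exact chain_lt hcons
  -- iff versions on elements
  have hiff : ∀ (a b : ℕ) (chain : ∀ p q, a ≤ p → p < q → q < b → X p < X q)
      (u v : Fin n), a ≤ (σ u : ℕ) → (σ u : ℕ) < b → a ≤ (σ v : ℕ) → (σ v : ℕ) < b →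
      ((σ u : ℕ) < (σ v : ℕ) ↔ u < v) := by
    intro a b chain u v hu1 hu2 hv1 hv2
    constructor
    · intro h
      have := chain (σ u : ℕ) (σ v : ℕ) hu1 h hv2
      rwa [hXdef, Xfun_sigma, Xfun_sigma] at this
    · intro h
      rcases lt_trichotomy ((σ u : ℕ)) ((σ v : ℕ)) with h1 | h1 | h1
      · exact h1
      · have : σ u = σ v := Fin.val_injective h1
        have : u = v := σ.injective this
        omega
      · have := chain (σ v : ℕ) (σ u : ℕ) hv1 h1 hu2
        rw [hXdef, Xfun_sigma, Xfun_sigma] at this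
        omega
  have hiffanti : ∀ (u v : Fin n), jj ≤ (σ u : ℕ) → (σ u : ℕ) < k →
      jj ≤ (σ v : ℕ) → (σ v : ℕ) < k → ((σ u : ℕ) < (σ v : ℕ) ↔ v < u) := by
    intro u v hu1 hu2 hv1 hv2
    constructor
    · intro h
      have := chainI (σ u : ℕ) (σ v : ℕ) hu1 h hv2
      rwa [hXdef, Xfun_sigma, Xfun_sigma] at this
    · intro h
      rcases lt_trichotomy ((σ u : ℕ)) ((σ v : ℕ)) with h1 | h1 | h1
      · exact h1
      · have : σ u = σ v := Fin.val_injective h1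
        have : u = v := σ.injective this
        omega
      · have := chainI (σ v : ℕ) (σ u : ℕ) hv1 h1 hu2
        rw [hXdef, Xfun_sigma, Xfun_sigma] at this
        omega
  -- define I and J
  set I : Finset (Fin n) := univ.filter (fun x => jj ≤ (σ x : ℕ) ∧ (σ x : ℕ) < k) with hI
  set J : Finset (Fin n) := univ.filter (fun x => (σ x : ℕ) < jj) with hJ
  have hmemI : ∀ x : Fin n, x ∈ I ↔ (jj ≤ (σ x : ℕ) ∧ (σ x : ℕ) < k) := by
    intro x; rw [hI]; simp
  have hmemJ : ∀ x : Fin n, x ∈ J ↔ (σ x : ℕ) < jj := by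
    intro x; rw [hJ]; simp
  have hdisj : Disjoint I J := by
    rw [Finset.disjoint_left]
    intro x hx hx2
    rw [hmemI] at hx
    rw [hmemJ] at hx2
    omega
  have hcardI : I.card = k - jj := by
    rw [hI]
    have := card_filter_perm (n := n) σ (fun z => jj ≤ (z : ℕ) ∧ (z : ℕ) < k)
    rw [this, card_filter_Ico_val jj k hkn]
  have hcardJ : J.card = jj := by
    rw [hJ]
    have := card_filter_perm (n := n) σ (fun z => (z : ℕ) < jj)
    rw [this, card_filter_lt_val jj (by omega)]
  have hcards : I.card + J.card = k := by rw [hcardI, hcardJ]; omega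
  -- rank computations
  have hrkJ : ∀ x : Fin n, (σ x : ℕ) < jj → rk J x = (σ x : ℕ) := by
    intro x hx
    have hset : J.filter (fun y => y < x) = univ.filter (fun y => (σ y : ℕ) < (σ x : ℕ)) := by
      ext y
      simp only [Finset.mem_filter, Finset.mem_univ, true_and, hJ]
      constructor
      · rintro ⟨h1, h2⟩
        exact (hiff 0 jj (fun p q _ => chainJ p q) y x (by omega) h1 (by omega) hx).mpr h2
      · intro h1
        have hyj : (σ y : ℕ) < jj := by omega
        exact ⟨hyj, (hiff 0 jj (fun p q _ => chainJ p q) y x (by omega) hyj (by omega) hx).mp h1⟩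
    rw [rk, hset, card_filter_perm σ (fun z => (z : ℕ) < (σ x : ℕ)),
      card_filter_lt_val _ (by omega)]
  have hrkI : ∀ x : Fin n, jj ≤ (σ x : ℕ) → (σ x : ℕ) < k → rk I x = k - 1 - (σ x : ℕ) := by
    intro x hx1 hx2
    have hset : I.filter (fun y => y < x)
        = univ.filter (fun y => (σ x : ℕ) + 1 ≤ (σ y : ℕ) ∧ (σ y : ℕ) < k) := by
      ext y
      simp only [Finset.mem_filter, Finset.mem_univ, true_and, hI]
      constructor
      · rintro ⟨⟨h1, h2⟩, h3⟩
        have := (hiffanti x y hx1 hx2 h1 h2).mpr h3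
        omega
      · rintro ⟨h1, h2⟩
        have hy1 : jj ≤ (σ y : ℕ) := by omega
        exact ⟨⟨hy1, h2⟩, (hiffanti x y hx1 hx2 hy1 h2).mp (by omega)⟩
    rw [rk, hset, card_filter_perm σ (fun z => (σ x : ℕ) + 1 ≤ (z : ℕ) ∧ (z : ℕ) < k),
      card_filter_Ico_val _ _ hkn]
    omega
  have hmemC : ∀ y : Fin n, y ∈ (I ∪ J)ᶜ ↔ k ≤ (σ y : ℕ) := by
    intro y
    rw [Finset.mem_compl, Finset.mem_union]
    rw [hmemI, hmemJ]
    constructor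
    · intro h
      push_neg at h
      omega
    · intro h hcon
      rcases hcon with hc | hc <;> omega
  have hrkC : ∀ x : Fin n, k ≤ (σ x : ℕ) → rk ((I ∪ J)ᶜ) x = (σ x : ℕ) - k := by
    intro x hx
    have hset : ((I ∪ J)ᶜ).filter (fun y => y < x)
        = univ.filter (fun y => k ≤ (σ y : ℕ) ∧ (σ y : ℕ) < (σ x : ℕ)) := by
      ext y
      rw [Finset.mem_filter, Finset.mem_filter, hmemC y]
      simp only [Finset.mem_univ, true_and]
      constructor
      · rintro ⟨h1, h2⟩
        exact ⟨h1, (hiff k n chainC y x h1 (σ y).isLt hx (σ x).isLt).mpr h2⟩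
      · rintro ⟨h1, h2⟩
        exact ⟨h1, (hiff k n chainC y x h1 (σ y).isLt hx (σ x).isLt).mp h2⟩
    rw [rk, hset, card_filter_perm σ (fun z => k ≤ (z : ℕ) ∧ (z : ℕ) < (σ x : ℕ)),
      card_filter_Ico_val _ _ (le_of_lt (σ x).isLt)]
  -- conclude
  refine ⟨I, J, hdisj, hcards, ?_⟩
  have htgt : ∀ x : Fin n, tgt k I J x = (σ x : ℕ) := by
    intro x
    by_cases h1 : (σ x : ℕ) < jj
    · have hxJ : x ∈ J := (hmemJ x).mpr h1
      rw [tgt_of_mem_J hdisj hxJ, hrkJ x h1]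
    · by_cases h2 : (σ x : ℕ) < k
      · have hxI : x ∈ I := (hmemI x).mpr ⟨by omega, h2⟩
        rw [tgt_of_mem_I hxI, hrkI x (by omega) h2]
        omega
      · have hxI : x ∉ I := fun hcon => by rw [hmemI] at hcon; omega
        have hxJ : x ∉ J := fun hcon => by rw [hmemJ] at hcon; omega
        rw [tgt_of_not_mem hxI hxJ, hrkC x (by omega)]
        omega
  have hsgn : ∀ x : Fin n, sgn I x = η x := by
    intro x
    have hXx : η x = η (X ((σ x : ℕ))) := by rw [hXdef, Xfun_sigma]
    by_cases hx : x ∈ I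
    · rw [sgn_of_mem hx, hXx]
      rw [hmemI] at hx
      exact (hneg _ hx.1 hx.2).symm
    · rw [sgn_of_not_mem hx, hXx]
      rw [hmemI] at hx
      by_cases h1 : (σ x : ℕ) < jj
      · exact (hposlt _ h1).symm
      · exact (g1 _ (by omega) (σ x).isLt).symm
  have hWeq : ∀ v, w v = (spe σ η hη2) v := by
    have hlin : (w : (Fin n → ℝ) →ₗ[ℝ] (Fin n → ℝ)) = (spe σ η hη2 : (Fin n → ℝ) →ₗ[ℝ] (Fin n → ℝ)) := by
      apply linear_eq_of_eps
      intro i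
      show w (eps n i) = spe σ η hη2 (eps n i)
      rw [hweps i, spe_apply_eps]
    intro v
    show (w : (Fin n → ℝ) →ₗ[ℝ] (Fin n → ℝ)) v = _
    rw [hlin]
    rfl
  rw [wIJ_eq_fun σ htgt]
  funext v m
  show sgn I (σ.symm m) * v (σ.symm m) = w v m
  rw [hWeq v, hsgn]
  rfl

end KRB


/-- `(I,J) ↦ w_{(I,J)}` is a bijection from `𝒮_k` onto `W^{P_k}`. -/
theorem kostant_rep_bijection
    (n k : ℕ) (hn : 3 ≤ n) (hk1 : 1 ≤ k) (hkn : k ≤ n) :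
    Set.InjOn (fun p : Finset (Fin n) × Finset (Fin n) => wIJ k p.1 p.2) (SIJ n k) ∧
    (fun p : Finset (Fin n) × Finset (Fin n) => wIJ k p.1 p.2) '' (SIJ n k)
      = {f | ∃ w ∈ WP n k, ⇑w = f} := by
  constructor
  · intro p1 h1 p2 h2 heq
    obtain ⟨hd1, hc1⟩ := h1
    obtain ⟨hd2, hc2⟩ := h2
    obtain ⟨hI, hJ⟩ := KRB.inj hd1 hc1 hd2 hc2 hkn heq
    exact Prod.ext hI hJ
  · ext f
    constructor
    · rintro ⟨⟨I, J⟩, ⟨hd, hc⟩, rfl⟩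
      obtain ⟨w, hw, hfw⟩ := KRB.fwd hd hc hk1 hkn
      exact ⟨w, hw, hfw⟩
    · rintro ⟨w, hw, rfl⟩
      obtain ⟨I, J, hd, hc, he⟩ := KRB.bwd hn hk1 hkn w hw
      exact ⟨(I, J), ⟨hd, hc⟩, he⟩

end
end

section
/- Let (I,J) be an ordered pair of disjoint subsets of {1,…,n} with |I|+|J| = k and set m = max({l ∈ {1,…,𝕛} : j_l < i for all i ∈ I} ∪ {0}). Then the length of w_{(I,J)} is ℓ(w_{(I,J)}) = Σ_{l=1}^{𝕚} (2n − k − i_l + 1) + Σ_{l=1}^{𝕛} (j_l − l) − Σ_{l=m+1}^{𝕛} |{i ∈ I : i < j_l}|. -/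
noncomputable section

open Finset

section Aux
variable {n : ℕ} (S : Finset (Fin n))
noncomputable def idx (x : Fin n) (hx : x ∈ S) : Fin S.card :=
  (S.orderIsoOfFin rfl).symm ⟨x, hx⟩

lemma card_filter_lt_fin {m : ℕ} (x : Fin m) :
    ((univ : Finset (Fin m)).filter (fun y => y < x)).card = (x : ℕ) := by
  have : (univ : Finset (Fin m)).filter (fun y => y < x) = Finset.Iio x := by
    ext y; simp [Finset.mem_Iio]
  rw [this, Fin.card_Iio]

lemma rk_eq_idx (x : Fin n) (hx : x ∈ S) : rk S x = (idx S x hx : ℕ) := by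
  classical
  rw [rk]
  rw [show S.filter (fun y => y < x) =
      ((univ : Finset (Fin S.card)).filter (fun l => l < idx S x hx)).image
        (fun l => ((S.orderIsoOfFin rfl l : Fin n))) from ?_]
  · rw [Finset.card_image_of_injective _ (fun a b hab => by
      have := Subtype.ext hab
      exact (S.orderIsoOfFin rfl).injective this)]
    exact card_filter_lt_fin _
  · ext y
    simp only [Finset.mem_filter, Finset.mem_image, Finset.mem_univ, true_and]
    constructor
    · rintro ⟨hyS, hyx⟩
      refine ⟨(S.orderIsoOfFin rfl).symm ⟨y, hyS⟩, ?_, by simp⟩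
      exact (S.orderIsoOfFin rfl).symm.strictMono (show (⟨y,hyS⟩:S) < ⟨x,hx⟩ from hyx)
    · rintro ⟨l, hl, rfl⟩
      refine ⟨(S.orderIsoOfFin rfl l).2, ?_⟩
      have : S.orderIsoOfFin rfl l < S.orderIsoOfFin rfl (idx S x hx) :=
        (S.orderIsoOfFin rfl).strictMono hl
      simp only [idx, OrderIso.apply_symm_apply] at this
      exact this

lemma rk_lt_card (x : Fin n) (hx : x ∈ S) : rk S x < S.card := by
  rw [rk_eq_idx S x hx]; exact (idx S x hx).isLt

lemma elt_rk (x : Fin n) (hx : x ∈ S) : elt S (rk S x) (rk_lt_card S x hx) = x := by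
  have : (⟨rk S x, rk_lt_card S x hx⟩ : Fin S.card) = idx S x hx := by
    ext; exact rk_eq_idx S x hx
  rw [elt, this, idx]; simp

lemma rk_elt (l : ℕ) (h : l < S.card) : rk S (elt S l h) = l := by
  have hm : elt S l h ∈ S := (S.orderIsoOfFin rfl ⟨l, h⟩).2
  rw [rk_eq_idx S _ hm]
  have : idx S (elt S l h) hm = ⟨l, h⟩ := by
    rw [idx]
    apply (S.orderIsoOfFin rfl).injective
    simp only [OrderIso.apply_symm_apply]
    exact Subtype.ext rfl
  rw [this]

lemma rk_strictMonoOn {x y : Fin n} (hx : x ∈ S) (hy : y ∈ S) (hxy : x < y) :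
    rk S x < rk S y := by
  rw [rk_eq_idx S x hx, rk_eq_idx S y hy]
  have : idx S x hx < idx S y hy := by
    apply (S.orderIsoOfFin rfl).symm.strictMono
    exact hxy
  exact this

lemma sum_elt {M : Type*} [AddCommMonoid M] (f : Fin n → M) :
    (∑ l : Fin S.card, f (elt S (l : ℕ) l.isLt)) = ∑ x ∈ S, f x := by
  rw [← Finset.sum_coe_sort S f]
  exact Fintype.sum_equiv (S.orderIsoOfFin rfl).toEquiv _ _ (fun l => rfl)

end Aux

section Aux2
variable {n : ℕ}

lemma eps_self (i : Fin n) : eps n i i = 1 := by simp [eps]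
lemma eps_ne {i m : Fin n} (h : m ≠ i) : eps n i m = 0 := by simp [eps, h]
lemma eps_nonneg (i m : Fin n) : 0 ≤ eps n i m := by
  unfold eps; split_ifs <;> norm_num
lemma eps_le_one (i m : Fin n) : eps n i m ≤ 1 := by
  unfold eps; split_ifs <;> norm_num
lemma eps_eq_one {c m : Fin n} (h : eps n c m = 1) : m = c := by
  by_contra hmc; rw [eps_ne hmc] at h; norm_num at h

lemma sub_eq_sub {a b c d : Fin n} (hab : a ≠ b) (hcd : c ≠ d)
    (h : eps n a - eps n b = eps n c - eps n d) : a = c ∧ b = d := by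
  have ha := congrFun h a
  have hb := congrFun h b
  simp only [Pi.sub_apply, eps_self, eps_ne hab, eps_ne (Ne.symm hab)] at ha hb
  constructor
  · by_contra hac
    rw [eps_ne hac] at ha
    have := eps_nonneg d a; linarith
  · by_contra hbd
    rw [eps_ne hbd] at hb
    have := eps_nonneg c b; linarith

lemma add_eq_add {a b c d : Fin n} (hab : a < b) (hcd : c < d)
    (h : eps n a + eps n b = eps n c + eps n d) : a = c ∧ b = d := by
  have ha := congrFun h a
  have hb := congrFun h b
  have hc := congrFun h c
  simp only [Pi.add_apply] at ha hb hc
  rw [eps_self, eps_ne hab.ne] at ha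
  rw [eps_ne (Ne.symm hab.ne), eps_self] at hb
  have hac : a = c := by
    by_contra hac
    by_cases had : a = d
    · -- then eval at c: c ≠ a, c ≠ d(=a? no, a = d so c ≠ a means c ≠ d ok)
      have hca : c ≠ a := Ne.symm hac
      have hcd' : eps n d c = 0 := eps_ne (fun hh => hca (hh.trans had.symm))
      rw [eps_self, hcd', eps_ne hca] at hc
      -- hc : 0 + eps b c = 1 + 0
      have hcb : c = b := eps_eq_one (by linarith)
      subst hcb
      exact absurd (hab.trans hcd) (by rw [← had]; exact lt_irrefl a)
    · rw [eps_ne hac, eps_ne had] at ha; norm_num at ha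
  subst hac
  refine ⟨rfl, ?_⟩
  by_contra hbd
  rw [eps_ne (Ne.symm hab.ne), eps_ne hbd] at hb
  linarith

lemma sub_ne_add {a b c d : Fin n} (hab : a ≠ b) :
    eps n a - eps n b ≠ eps n c + eps n d := by
  intro h
  have hb := congrFun h b
  simp only [Pi.sub_apply, Pi.add_apply, eps_self, eps_ne (Ne.symm hab)] at hb
  have := eps_nonneg c b; have := eps_nonneg d b; linarith

lemma sub_ne_eps {a b c : Fin n} (hab : a ≠ b) : eps n a - eps n b ≠ eps n c := by
  intro h
  have hb := congrFun h b
  simp only [Pi.sub_apply, eps_self, eps_ne (Ne.symm hab)] at hb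
  have := eps_nonneg c b; linarith

lemma add_ne_eps {a b c : Fin n} (hab : a ≠ b) : eps n a + eps n b ≠ eps n c := by
  intro h
  have ha := congrFun h a
  have hb := congrFun h b
  simp only [Pi.add_apply, eps_self, eps_ne hab, eps_ne (Ne.symm hab)] at ha hb
  rw [add_zero] at ha; rw [zero_add] at hb
  exact hab ((eps_eq_one ha.symm).trans (eps_eq_one hb.symm).symm)

lemma eps_injective : Function.Injective (eps n) := by
  intro a b h
  exact eps_eq_one (by rw [← h, eps_self])

lemma nonpos_ne_add {v : Fin n → ℝ} {c d : Fin n} (h : v c ≤ 0) :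
    v ≠ eps n c + eps n d := by
  intro he
  have := congrFun he c
  simp only [Pi.add_apply, eps_self] at this
  have := eps_nonneg d c; linarith [congrFun he c, eps_self (n := n) c]

lemma nonpos_ne_eps {v : Fin n → ℝ} {c : Fin n} (h : v c ≤ 0) : v ≠ eps n c := by
  intro he
  have := congrFun he c
  rw [eps_self] at this; linarith

-- PosRoot membership characterizations
lemma posRoot_sub {a b : Fin n} (hab : a ≠ b) :
    eps n a - eps n b ∈ PosRoot n ↔ a < b := by
  constructor
  · rintro (⟨i, j, hij, (h | h)⟩ | ⟨i, h⟩)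
    · obtain ⟨rfl, rfl⟩ := sub_eq_sub hab hij.ne h; exact hij
    · exact absurd h (sub_ne_add hab)
    · exact absurd h (sub_ne_eps hab)
  · intro h; exact Or.inl ⟨a, b, h, Or.inl rfl⟩

lemma posRoot_add {a b : Fin n} (hab : a ≠ b) : eps n a + eps n b ∈ PosRoot n := by
  rcases lt_or_gt_of_ne hab with h | h
  · exact Or.inl ⟨a, b, h, Or.inr rfl⟩
  · exact Or.inl ⟨b, a, h, Or.inr (add_comm _ _)⟩

lemma posRoot_eps (a : Fin n) : eps n a ∈ PosRoot n := Or.inr ⟨a, rfl⟩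

lemma neg_add_not_posRoot {a b : Fin n} (hab : a ≠ b) :
    -(eps n a + eps n b) ∉ PosRoot n := by
  have hva : (-(eps n a + eps n b)) a ≤ 0 := by
    simp only [Pi.neg_apply, Pi.add_apply]
    have := eps_nonneg a a; have := eps_nonneg b a; linarith
  have hvb : ∀ c, (-(eps n a + eps n b)) c ≤ 0 := by
    intro c
    simp only [Pi.neg_apply, Pi.add_apply]
    have := eps_nonneg a c; have := eps_nonneg b c; linarith
  rintro (⟨i, j, hij, (h | h)⟩ | ⟨i, h⟩)
  · refine sub_ne_add hij.ne' (show eps n j - eps n i = eps n a + eps n b from ?_)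
    rw [show eps n j - eps n i = -(eps n i - eps n j) by ring, ← h]; ring
  · exact nonpos_ne_add (hvb i) h
  · exact nonpos_ne_eps (hvb i) h

lemma neg_eps_not_posRoot (a : Fin n) : -eps n a ∉ PosRoot n := by
  have hv : ∀ c, (-eps n a) c ≤ 0 := fun c => by
    simp only [Pi.neg_apply]; linarith [eps_nonneg a c]
  rintro (⟨i, j, hij, (h | h)⟩ | ⟨i, h⟩)
  · refine sub_ne_eps hij.ne' (show eps n j - eps n i = eps n a from ?_)
    rw [show eps n j - eps n i = -(eps n i - eps n j) by ring, ← h]; ring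
  · exact nonpos_ne_add (hv i) h
  · exact nonpos_ne_eps (hv i) h

-- NegRoot characterizations
lemma negRoot_sub {a b : Fin n} (hab : a ≠ b) :
    eps n a - eps n b ∈ NegRoot n ↔ b < a := by
  have : -(eps n a - eps n b) = eps n b - eps n a := by ring
  rw [NegRoot, Set.mem_setOf_eq, this, posRoot_sub (Ne.symm hab)]

lemma negRoot_neg_sub {a b : Fin n} (hab : a ≠ b) : -eps n a - eps n b ∈ NegRoot n := by
  have h2 : -(-eps n a - eps n b) = eps n a + eps n b := by ring
  rw [NegRoot, Set.mem_setOf_eq, h2]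
  exact posRoot_add hab

lemma not_negRoot_add {a b : Fin n} (hab : a ≠ b) : eps n a + eps n b ∉ NegRoot n :=
  neg_add_not_posRoot hab

lemma not_negRoot_eps (a : Fin n) : eps n a ∉ NegRoot n := neg_eps_not_posRoot a

lemma negRoot_neg_eps (a : Fin n) : -eps n a ∈ NegRoot n := by
  rw [NegRoot, Set.mem_setOf_eq, neg_neg]; exact posRoot_eps a

end Aux2

section
variable {n k : ℕ} {I J : Finset (Fin n)}

lemma card_compl_IJ (hdisj : Disjoint I J) (hcard : I.card + J.card = k) :
    ((I ∪ J)ᶜ).card = n - k := by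
  rw [Finset.card_compl, Finset.card_union_of_disjoint hdisj, hcard, Fintype.card_fin]

lemma tgt_mem_I (hcard : I.card + J.card = k) {x : Fin n} (hx : x ∈ I) :
    J.card ≤ tgt k I J x ∧ tgt k I J x < k := by
  have h1 := rk_lt_card I x hx
  rw [tgt, if_pos hx]
  omega

lemma tgt_mem_J (hdisj : Disjoint I J) {x : Fin n} (hx : x ∈ J) : tgt k I J x < J.card := by
  have hxI : x ∉ I := fun h => (Finset.disjoint_left.mp hdisj h) hx
  rw [tgt, if_neg hxI, if_pos hx]
  exact rk_lt_card J x hx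

lemma tgt_mem_compl (hdisj : Disjoint I J) (hcard : I.card + J.card = k)
    {x : Fin n} (hxI : x ∉ I) (hxJ : x ∉ J) :
    k ≤ tgt k I J x ∧ tgt k I J x < n := by
  have hx : x ∈ (I ∪ J)ᶜ := by simp [hxI, hxJ]
  have h1 := rk_lt_card _ x hx
  rw [card_compl_IJ hdisj hcard] at h1
  have hkn : k ≤ n := by
    have := (I ∪ J).card_le_univ
    rw [Finset.card_union_of_disjoint hdisj, hcard] at this
    simpa using this
  rw [tgt, if_neg hxI, if_neg hxJ]
  omega

lemma tgt_lt_n (hdisj : Disjoint I J) (hcard : I.card + J.card = k) (hkn : k ≤ n)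
    (x : Fin n) : tgt k I J x < n := by
  by_cases hxI : x ∈ I
  · exact lt_of_lt_of_le (tgt_mem_I hcard hxI).2 hkn
  · by_cases hxJ : x ∈ J
    · have h1 := tgt_mem_J (k := k) hdisj hxJ
      omega
    · exact (tgt_mem_compl hdisj hcard hxI hxJ).2

lemma tgt_anti_I (hcard : I.card + J.card = k) {x y : Fin n} (hx : x ∈ I) (hy : y ∈ I) (hxy : x < y) :
    tgt k I J y < tgt k I J x := by
  have h1 := rk_strictMonoOn I hx hy hxy
  have h2 := rk_lt_card I y hy
  have h3 := rk_strictMonoOn I hx hy hxy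
  have h4 : I.card ≤ k := by omega
  unfold tgt
  rw [if_pos hx, if_pos hy]
  omega

lemma tgt_mono_J (hdisj : Disjoint I J) {x y : Fin n} (hx : x ∈ J) (hy : y ∈ J)
    (hxy : x < y) : tgt k I J x < tgt k I J y := by
  have hxI : x ∉ I := fun h => (Finset.disjoint_left.mp hdisj h) hx
  have hyI : y ∉ I := fun h => (Finset.disjoint_left.mp hdisj h) hy
  unfold tgt
  rw [if_neg hxI, if_pos hx, if_neg hyI, if_pos hy]
  exact rk_strictMonoOn J hx hy hxy

lemma tgt_mono_compl {x y : Fin n} (hxI : x ∉ I) (hxJ : x ∉ J) (hyI : y ∉ I) (hyJ : y ∉ J)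
    (hxy : x < y) : tgt k I J x < tgt k I J y := by
  unfold tgt
  rw [if_neg hxI, if_neg hxJ, if_neg hyI, if_neg hyJ]
  have hx : x ∈ (I ∪ J)ᶜ := by simp [hxI, hxJ]
  have hy : y ∈ (I ∪ J)ᶜ := by simp [hyI, hyJ]
  have := rk_strictMonoOn ((I ∪ J)ᶜ) hx hy hxy
  omega

lemma tgt_inj (hdisj : Disjoint I J) (hcard : I.card + J.card = k)
    {x y : Fin n} (hxy : x ≠ y) : tgt k I J x ≠ tgt k I J y := by
  intro heq
  have hJk : J.card ≤ k := by omega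
  by_cases hxI : x ∈ I <;> by_cases hyI : y ∈ I
  · rcases lt_or_gt_of_ne hxy with h | h
    · exact absurd heq (tgt_anti_I hcard hxI hyI h).ne'
    · exact absurd heq (tgt_anti_I hcard hyI hxI h).ne
  · have h1 := tgt_mem_I hcard hxI
    by_cases hyJ : y ∈ J
    · have h2 := tgt_mem_J (k := k) hdisj hyJ; omega
    · have h2 := tgt_mem_compl hdisj hcard hyI hyJ; omega
  · have h1 := tgt_mem_I hcard hyI
    by_cases hxJ : x ∈ J
    · have h2 := tgt_mem_J (k := k) hdisj hxJ; omega
    · have h2 := tgt_mem_compl hdisj hcard hxI hxJ; omega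
  · by_cases hxJ : x ∈ J <;> by_cases hyJ : y ∈ J
    · rcases lt_or_gt_of_ne hxy with h | h
      · exact absurd heq (tgt_mono_J hdisj hxJ hyJ h).ne
      · exact absurd heq (tgt_mono_J hdisj hyJ hxJ h).ne'
    · have h1 := tgt_mem_J (k := k) hdisj hxJ
      have h2 := tgt_mem_compl hdisj hcard hyI hyJ; omega
    · have h1 := tgt_mem_J (k := k) hdisj hyJ
      have h2 := tgt_mem_compl hdisj hcard hxI hxJ; omega
    · rcases lt_or_gt_of_ne hxy with h | h
      · exact absurd heq (tgt_mono_compl hxI hxJ hyI hyJ h).ne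
      · exact absurd heq (tgt_mono_compl hyI hyJ hxI hxJ h).ne'

-- wIJ computations
lemma wIJ_apply_eps (x : Fin n) (m : Fin n) :
    wIJ k I J (eps n x) m = if tgt k I J x = (m : ℕ) then sgn I x else 0 := by
  rw [wIJ]
  rw [Finset.sum_eq_single x]
  · simp [eps]
  · intro y _ hyx
    simp [eps, hyx, Ne.symm hyx]
  · simp

lemma wIJ_sub (u v : Fin n → ℝ) : wIJ k I J (u - v) = wIJ k I J u - wIJ k I J v := by
  funext m
  simp only [wIJ, Pi.sub_apply, ← Finset.sum_sub_distrib]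
  apply Finset.sum_congr rfl
  intro x _
  split_ifs <;> ring

lemma wIJ_add (u v : Fin n → ℝ) : wIJ k I J (u + v) = wIJ k I J u + wIJ k I J v := by
  funext m
  simp only [wIJ, Pi.add_apply, ← Finset.sum_add_distrib]
  apply Finset.sum_congr rfl
  intro x _
  split_ifs <;> ring

lemma wIJ_eps (hdisj : Disjoint I J) (hcard : I.card + J.card = k) (hkn : k ≤ n) (x : Fin n) :
    wIJ k I J (eps n x) = sgn I x • eps n ⟨tgt k I J x, tgt_lt_n hdisj hcard hkn x⟩ := by
  funext m
  rw [wIJ_apply_eps]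
  simp only [Pi.smul_apply, smul_eq_mul, eps]
  by_cases h : tgt k I J x = (m : ℕ)
  · rw [if_pos h, if_pos (Fin.ext h.symm), mul_one]
  · rw [if_neg h, if_neg (fun hh : m = _ => h (congrArg Fin.val hh).symm), mul_zero]

end

section Inv
variable {n k : ℕ} {I J : Finset (Fin n)}

lemma inv_eps_iff (hdisj : Disjoint I J) (hcard : I.card + J.card = k) (hkn : k ≤ n)
    (a : Fin n) : wIJ k I J (eps n a) ∈ NegRoot n ↔ a ∈ I := by
  rw [wIJ_eps hdisj hcard hkn]
  by_cases ha : a ∈ I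
  · simp only [sgn, if_pos ha, neg_one_smul]
    exact iff_of_true (negRoot_neg_eps _) ha
  · simp only [sgn, if_neg ha, one_smul]
    exact iff_of_false (not_negRoot_eps _) ha

lemma inv_sub_iff (hdisj : Disjoint I J) (hcard : I.card + J.card = k) (hkn : k ≤ n)
    {a b : Fin n} (hab : a < b) :
    wIJ k I J (eps n a - eps n b) ∈ NegRoot n ↔
      ((a ∈ I ∧ b ∉ I) ∨ (a ∉ I ∧ a ∉ J ∧ b ∈ J)) := by
  rw [wIJ_sub, wIJ_eps hdisj hcard hkn, wIJ_eps hdisj hcard hkn]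
  set A : Fin n := ⟨tgt k I J a, tgt_lt_n hdisj hcard hkn a⟩ with hA
  set B : Fin n := ⟨tgt k I J b, tgt_lt_n hdisj hcard hkn b⟩ with hB
  have hAB : A ≠ B := by
    simp only [hA, hB, Ne, Fin.mk.injEq]
    exact tgt_inj hdisj hcard hab.ne
  have hABlt : (A < B) = (tgt k I J a < tgt k I J b) := by rfl
  by_cases haI : a ∈ I <;> by_cases hbI : b ∈ I
  · -- both in I : never
    simp only [sgn, if_pos haI, if_pos hbI, neg_one_smul]
    rw [show -eps n A - -eps n B = eps n B - eps n A by ring]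
    rw [negRoot_sub (Ne.symm hAB)]
    have h1 := tgt_anti_I (J := J) hcard haI hbI hab
    constructor
    · intro h; exact absurd h (by rw [hABlt]; omega)
    · rintro ((⟨_, hc⟩) | (⟨hc, _⟩)) <;> exact absurd ‹_› (by tauto)
  · -- a ∈ I, b ∉ I : always
    simp only [sgn, if_pos haI, if_neg hbI, neg_one_smul, one_smul]
    exact iff_of_true (negRoot_neg_sub hAB) (Or.inl ⟨haI, hbI⟩)
  · -- a ∉ I, b ∈ I : never
    simp only [sgn, if_neg haI, if_pos hbI, neg_one_smul, one_smul]
    rw [show eps n A - -eps n B = eps n A + eps n B by ring]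
    refine iff_of_false (not_negRoot_add hAB) ?_
    rintro (⟨hc, _⟩ | ⟨_, _, hc⟩)
    · exact haI hc
    · exact (Finset.disjoint_left.mp hdisj hbI) hc
  · -- neither in I
    simp only [sgn, if_neg haI, if_neg hbI, one_smul]
    rw [negRoot_sub hAB]
    have key : (B < A) ↔ (tgt k I J b < tgt k I J a) := Iff.rfl
    rw [key]
    by_cases haJ : a ∈ J <;> by_cases hbJ : b ∈ J
    · have h1 := tgt_mono_J (k := k) hdisj haJ hbJ hab
      exact iff_of_false (by omega) (by tauto)
    · have h1 := tgt_mem_J (k := k) hdisj haJ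
      have h2 := tgt_mem_compl hdisj hcard hbI hbJ
      have hJk : J.card ≤ k := by omega
      exact iff_of_false (by omega) (by tauto)
    · have h1 := tgt_mem_J (k := k) hdisj hbJ
      have h2 := tgt_mem_compl hdisj hcard haI haJ
      have hJk : J.card ≤ k := by omega
      exact iff_of_true (by omega) (Or.inr ⟨haI, haJ, hbJ⟩)
    · have h1 := tgt_mono_compl (k := k) haI haJ hbI hbJ hab
      exact iff_of_false (by omega) (by tauto)

lemma inv_add_iff (hdisj : Disjoint I J) (hcard : I.card + J.card = k) (hkn : k ≤ n)
    {a b : Fin n} (hab : a < b) :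
    wIJ k I J (eps n a + eps n b) ∈ NegRoot n ↔
      ((a ∈ I ∧ b ∈ I) ∨ (a ∈ I ∧ b ∉ I ∧ b ∉ J) ∨ (a ∉ I ∧ a ∉ J ∧ b ∈ I)) := by
  rw [wIJ_add, wIJ_eps hdisj hcard hkn, wIJ_eps hdisj hcard hkn]
  set A : Fin n := ⟨tgt k I J a, tgt_lt_n hdisj hcard hkn a⟩ with hA
  set B : Fin n := ⟨tgt k I J b, tgt_lt_n hdisj hcard hkn b⟩ with hB
  have hAB : A ≠ B := by
    simp only [hA, hB, Ne, Fin.mk.injEq]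
    exact tgt_inj hdisj hcard hab.ne
  by_cases haI : a ∈ I <;> by_cases hbI : b ∈ I
  · simp only [sgn, if_pos haI, if_pos hbI, neg_one_smul]
    rw [show -eps n A + -eps n B = -eps n A - eps n B by ring]
    exact iff_of_true (negRoot_neg_sub hAB) (Or.inl ⟨haI, hbI⟩)
  · simp only [sgn, if_pos haI, if_neg hbI, neg_one_smul, one_smul]
    rw [show -eps n A + eps n B = eps n B - eps n A by ring]
    rw [negRoot_sub (Ne.symm hAB)]
    have key : (A < B) ↔ (tgt k I J a < tgt k I J b) := Iff.rfl
    rw [key]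
    by_cases hbJ : b ∈ J
    · have h1 := tgt_mem_J (k := k) hdisj hbJ
      have h2 := tgt_mem_I hcard haI
      exact iff_of_false (by omega) (by tauto)
    · have h1 := tgt_mem_I hcard haI
      have h2 := tgt_mem_compl hdisj hcard hbI hbJ
      exact iff_of_true (by omega) (Or.inr (Or.inl ⟨haI, hbI, hbJ⟩))
  · simp only [sgn, if_neg haI, if_pos hbI, neg_one_smul, one_smul]
    rw [show eps n A + -eps n B = eps n A - eps n B by ring]
    rw [negRoot_sub hAB]
    have key : (B < A) ↔ (tgt k I J b < tgt k I J a) := Iff.rfl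
    rw [key]
    by_cases haJ : a ∈ J
    · have h1 := tgt_mem_J (k := k) hdisj haJ
      have h2 := tgt_mem_I hcard hbI
      have hJk : J.card ≤ k := by omega
      exact iff_of_false (by omega) (by tauto)
    · have h1 := tgt_mem_I hcard hbI
      have h2 := tgt_mem_compl hdisj hcard haI haJ
      exact iff_of_true (by omega) (Or.inr (Or.inr ⟨haI, haJ, hbI⟩))
  · simp only [sgn, if_neg haI, if_neg hbI, one_smul]
    exact iff_of_false (not_negRoot_add hAB) (by tauto)

end Inv

section Count
variable {n : ℕ}

def Q2 (I J : Finset (Fin n)) : Finset (Fin n × Fin n) :=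
  Finset.univ.filter (fun p => (p.1 < p.2 ∧ p.1 ∈ I ∧ p.2 ∉ I) ∨
    (p.1 < p.2 ∧ p.1 ∉ I ∧ p.1 ∉ J ∧ p.2 ∈ J))

def Q3 (I J : Finset (Fin n)) : Finset (Fin n × Fin n) :=
  Finset.univ.filter (fun p => (p.1 < p.2 ∧ p.1 ∈ I ∧ p.2 ∈ I) ∨
    (p.1 < p.2 ∧ p.1 ∈ I ∧ p.2 ∉ I ∧ p.2 ∉ J) ∨
    (p.1 < p.2 ∧ p.1 ∉ I ∧ p.1 ∉ J ∧ p.2 ∈ I))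

variable {k : ℕ} {I J : Finset (Fin n)}

lemma invSet_eq (hdisj : Disjoint I J) (hcard : I.card + J.card = k) (hkn : k ≤ n) :
    {β | β ∈ PosRoot n ∧ wIJ k I J β ∈ NegRoot n} =
      ↑(I.image (eps n) ∪ (Q2 I J).image (fun p => eps n p.1 - eps n p.2) ∪
        (Q3 I J).image (fun p => eps n p.1 + eps n p.2)) := by
  ext β
  simp only [Set.mem_setOf_eq, Finset.coe_union, Set.mem_union, Finset.mem_coe,
    Finset.mem_image, Q2, Q3, Finset.mem_filter, Finset.mem_univ, true_and]
  constructor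
  · rintro ⟨hpos, hneg⟩
    rcases hpos with ⟨i, j, hij, (rfl | rfl)⟩ | ⟨i, rfl⟩
    · rw [inv_sub_iff hdisj hcard hkn hij] at hneg
      refine Or.inl (Or.inr ⟨(i, j), ?_, rfl⟩)
      rcases hneg with h | h
      · exact Or.inl ⟨hij, h.1, h.2⟩
      · exact Or.inr ⟨hij, h.1, h.2.1, h.2.2⟩
    · rw [inv_add_iff hdisj hcard hkn hij] at hneg
      refine Or.inr ⟨(i, j), ?_, rfl⟩
      rcases hneg with h | h | h
      · exact Or.inl ⟨hij, h.1, h.2⟩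
      · exact Or.inr (Or.inl ⟨hij, h.1, h.2.1, h.2.2⟩)
      · exact Or.inr (Or.inr ⟨hij, h.1, h.2.1, h.2.2⟩)
    · rw [inv_eps_iff hdisj hcard hkn] at hneg
      exact Or.inl (Or.inl ⟨i, hneg, rfl⟩)
  · rintro ((⟨i, hi, rfl⟩ | ⟨p, hp, rfl⟩) | ⟨p, hp, rfl⟩)
    · exact ⟨posRoot_eps i, (inv_eps_iff hdisj hcard hkn i).mpr hi⟩
    · have hlt : p.1 < p.2 := by rcases hp with h | h <;> exact h.1
      refine ⟨(posRoot_sub hlt.ne).mpr hlt, (inv_sub_iff hdisj hcard hkn hlt).mpr ?_⟩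
      rcases hp with h | h
      · exact Or.inl ⟨h.2.1, h.2.2⟩
      · exact Or.inr ⟨h.2.1, h.2.2.1, h.2.2.2⟩
    · have hlt : p.1 < p.2 := by rcases hp with h | h | h <;> exact h.1
      refine ⟨posRoot_add hlt.ne, (inv_add_iff hdisj hcard hkn hlt).mpr ?_⟩
      rcases hp with h | h | h
      · exact Or.inl ⟨h.2.1, h.2.2⟩
      · exact Or.inr (Or.inl ⟨h.2.1, h.2.2.1, h.2.2.2⟩)
      · exact Or.inr (Or.inr ⟨h.2.1, h.2.2.1, h.2.2.2⟩)

lemma Q2_lt {p : Fin n × Fin n} (hp : p ∈ Q2 I J) : p.1 < p.2 := by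
  simp only [Q2, Finset.mem_filter] at hp
  rcases hp.2 with h | h <;> exact h.1

lemma Q3_lt {p : Fin n × Fin n} (hp : p ∈ Q3 I J) : p.1 < p.2 := by
  simp only [Q3, Finset.mem_filter] at hp
  rcases hp.2 with h | h | h <;> exact h.1

lemma len_eq (hdisj : Disjoint I J) (hcard : I.card + J.card = k) (hkn : k ≤ n) :
    len (wIJ k I J) = I.card + (Q2 I J).card + (Q3 I J).card := by
  have hinj2 : Set.InjOn (fun p : Fin n × Fin n => eps n p.1 - eps n p.2) ↑(Q2 I J) := by
    intro p hp q hq hpq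
    obtain ⟨h1, h2⟩ := sub_eq_sub (Q2_lt (Finset.mem_coe.mp hp)).ne
      (Q2_lt (Finset.mem_coe.mp hq)).ne hpq
    exact Prod.ext h1 h2
  have hinj3 : Set.InjOn (fun p : Fin n × Fin n => eps n p.1 + eps n p.2) ↑(Q3 I J) := by
    intro p hp q hq hpq
    obtain ⟨h1, h2⟩ := add_eq_add (Q3_lt (Finset.mem_coe.mp hp))
      (Q3_lt (Finset.mem_coe.mp hq)) hpq
    exact Prod.ext h1 h2
  have hd12 : Disjoint (I.image (eps n))
      ((Q2 I J).image (fun p => eps n p.1 - eps n p.2)) := by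
    rw [Finset.disjoint_left]
    rintro v hv1 hv2
    obtain ⟨i, _, rfl⟩ := Finset.mem_image.mp hv1
    obtain ⟨p, hp, hv⟩ := Finset.mem_image.mp hv2
    exact sub_ne_eps (Q2_lt hp).ne hv
  have hd123 : Disjoint (I.image (eps n) ∪
      (Q2 I J).image (fun p => eps n p.1 - eps n p.2))
      ((Q3 I J).image (fun p => eps n p.1 + eps n p.2)) := by
    rw [Finset.disjoint_left]
    rintro v hv1 hv2
    obtain ⟨p, hp, rfl⟩ := Finset.mem_image.mp hv2
    rcases Finset.mem_union.mp hv1 with hv | hv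
    · obtain ⟨i, _, hv⟩ := Finset.mem_image.mp hv
      exact add_ne_eps (Q3_lt hp).ne hv.symm
    · obtain ⟨q, hq, hv⟩ := Finset.mem_image.mp hv
      exact sub_ne_add (Q2_lt hq).ne hv
  rw [len, invSet_eq hdisj hcard hkn, Set.ncard_coe_finset,
    Finset.card_union_of_disjoint hd123, Finset.card_union_of_disjoint hd12,
    Finset.card_image_of_injective _ eps_injective,
    Finset.card_image_of_injOn hinj2, Finset.card_image_of_injOn hinj3]

end Count

section Arith
variable {n : ℕ}

lemma card_filter_prod (R : Fin n × Fin n → Prop) [DecidablePred R] :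
    (Finset.univ.filter R).card =
      ∑ a : Fin n, (Finset.univ.filter fun b => R (a, b)).card := by
  rw [Finset.card_filter, Fintype.sum_prod_type]
  exact Finset.sum_congr rfl fun a _ => (Finset.card_filter _ _).symm

lemma pair_count (S T : Finset (Fin n)) :
    (Finset.univ.filter fun p : Fin n × Fin n => p.1 < p.2 ∧ p.1 ∈ S ∧ p.2 ∈ T).card
      = ∑ a ∈ S, (T.filter fun b => a < b).card := by
  rw [card_filter_prod]
  rw [← Finset.sum_subset S.subset_univ (fun a _ haS => ?_)]
  · apply Finset.sum_congr rfl
    intro a haS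
    congr 1
    ext b
    simp [haS, and_comm]
  · convert Finset.card_empty
    ext b
    simp only [Finset.mem_filter, Finset.mem_univ, true_and, Finset.notMem_empty, iff_false]
    tauto

lemma count_split (S : Finset (Fin n)) (a : Fin n) :
    rk S a + (S.filter fun b => a < b).card + (if a ∈ S then 1 else 0) = S.card := by
  classical
  have h1 := Finset.card_filter_add_card_filter_not (s := S)
    (p := fun b => b < a)
  have h2 := Finset.card_filter_add_card_filter_not
    (s := S.filter fun b => ¬ b < a) (p := fun b => a < b)
  rw [Finset.filter_filter, Finset.filter_filter] at h2
  have e1 : S.filter (fun b => ¬ b < a ∧ a < b) = S.filter (fun b => a < b) := by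
    apply Finset.filter_congr; intro b _; constructor
    · exact fun h => h.2
    · exact fun h => ⟨not_lt_of_gt h, h⟩
  have e2 : S.filter (fun b => ¬ b < a ∧ ¬ a < b) = S.filter (fun b => b = a) := by
    apply Finset.filter_congr; intro b _; constructor
    · rintro ⟨h1', h2'⟩; omega
    · rintro rfl; simp
  rw [e1, e2, Finset.filter_eq'] at h2
  rw [rk]
  split_ifs at h2 ⊢ with h
  · rw [Finset.card_singleton] at h2; omega
  · rw [Finset.card_empty] at h2; omega

lemma cnt_univ_split (a : Fin n) :
    (a : ℕ) + ((Finset.univ : Finset (Fin n)).filter fun b => a < b).card + 1 = n := by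
  have h := count_split Finset.univ a
  rw [Finset.card_univ, Fintype.card_fin] at h
  have h2 : rk Finset.univ a = (a : ℕ) := card_filter_lt_fin a
  simp only [Finset.mem_univ, if_true] at h
  omega

lemma filter_partition {I J : Finset (Fin n)} (hdisj : Disjoint I J)
    (p : Fin n → Prop) [DecidablePred p] :
    (Finset.univ.filter p).card =
      (I.filter p).card + (J.filter p).card + (((I ∪ J)ᶜ).filter p).card := by
  classical
  have e : Finset.univ.filter p = (I.filter p ∪ J.filter p) ∪ ((I ∪ J)ᶜ).filter p := by
    ext b
    by_cases hbI : b ∈ I <;> by_cases hbJ : b ∈ J <;>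
      simp [Finset.mem_filter, hbI, hbJ]
  have d1 : Disjoint (I.filter p) (J.filter p) :=
    Finset.disjoint_filter_filter hdisj
  have d2 : Disjoint (I.filter p ∪ J.filter p) (((I ∪ J)ᶜ).filter p) := by
    rw [← Finset.filter_union]
    exact Finset.disjoint_filter_filter disjoint_compl_right
  rw [e, Finset.card_union_of_disjoint d2, Finset.card_union_of_disjoint d1]

lemma cnt_Ic_split (I : Finset (Fin n)) (a : Fin n) :
    ((Finset.univ : Finset (Fin n)).filter fun b => a < b).card =
      (I.filter fun b => a < b).card + (Iᶜ.filter fun b => a < b).card := by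
  classical
  have e : (Finset.univ : Finset (Fin n)).filter (fun b => a < b) =
      I.filter (fun b => a < b) ∪ Iᶜ.filter (fun b => a < b) := by
    ext b; by_cases hb : b ∈ I <;> simp [hb]
  rw [e, Finset.card_union_of_disjoint]
  exact Finset.disjoint_filter_filter disjoint_compl_right

lemma rk_split {I J : Finset (Fin n)} (hdisj : Disjoint I J) (a : Fin n) :
    rk I a + rk J a + rk ((I ∪ J)ᶜ) a = (a : ℕ) := by
  have h := filter_partition hdisj (fun b => b < a)
  rw [card_filter_lt_fin a] at h
  rw [rk, rk, rk]
  omega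

lemma cnt_transpose (S T : Finset (Fin n)) :
    ∑ a ∈ S, (T.filter fun b => a < b).card = ∑ b ∈ T, rk S b := by
  simp only [Finset.card_filter, rk]
  rw [Finset.sum_comm]

end Arith

section Main
variable {n k : ℕ} {I J : Finset (Fin n)}

lemma Q2_card (hdisj : Disjoint I J) :
    (Q2 I J).card = (∑ a ∈ I, (Iᶜ.filter fun b => a < b).card)
      + ∑ a ∈ (I ∪ J)ᶜ, (J.filter fun b => a < b).card := by
  classical
  have e : Q2 I J =
      (Finset.univ.filter fun p : Fin n × Fin n => p.1 < p.2 ∧ p.1 ∈ I ∧ p.2 ∈ Iᶜ) ∪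
      (Finset.univ.filter fun p : Fin n × Fin n => p.1 < p.2 ∧ p.1 ∈ (I ∪ J)ᶜ ∧ p.2 ∈ J) := by
    ext p
    simp only [Q2, Finset.mem_union, Finset.mem_filter, Finset.mem_univ, true_and,
      Finset.mem_compl]
    tauto
  rw [e, Finset.card_union_of_disjoint, pair_count, pair_count]
  rw [Finset.disjoint_left]
  rintro p hp1 hp2
  simp only [Finset.mem_filter, Finset.mem_univ, true_and, Finset.mem_compl,
    Finset.mem_union] at hp1 hp2
  tauto

lemma Q3_card (hdisj : Disjoint I J) :
    (Q3 I J).card = (∑ a ∈ I, (I.filter fun b => a < b).card)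
      + (∑ a ∈ I, (((I ∪ J)ᶜ).filter fun b => a < b).card)
      + ∑ a ∈ (I ∪ J)ᶜ, (I.filter fun b => a < b).card := by
  classical
  have e : Q3 I J =
      ((Finset.univ.filter fun p : Fin n × Fin n => p.1 < p.2 ∧ p.1 ∈ I ∧ p.2 ∈ I) ∪
       (Finset.univ.filter fun p : Fin n × Fin n => p.1 < p.2 ∧ p.1 ∈ I ∧ p.2 ∈ (I ∪ J)ᶜ)) ∪
      (Finset.univ.filter fun p : Fin n × Fin n => p.1 < p.2 ∧ p.1 ∈ (I ∪ J)ᶜ ∧ p.2 ∈ I) := by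
    ext p
    simp only [Q3, Finset.mem_union, Finset.mem_filter, Finset.mem_univ, true_and,
      Finset.mem_compl]
    tauto
  have d1 : Disjoint
      (Finset.univ.filter fun p : Fin n × Fin n => p.1 < p.2 ∧ p.1 ∈ I ∧ p.2 ∈ I)
      (Finset.univ.filter fun p : Fin n × Fin n => p.1 < p.2 ∧ p.1 ∈ I ∧ p.2 ∈ (I ∪ J)ᶜ) := by
    rw [Finset.disjoint_left]
    rintro p hp1 hp2
    simp only [Finset.mem_filter, Finset.mem_univ, true_and, Finset.mem_compl,
      Finset.mem_union] at hp1 hp2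
    tauto
  have d2 : Disjoint
      ((Finset.univ.filter fun p : Fin n × Fin n => p.1 < p.2 ∧ p.1 ∈ I ∧ p.2 ∈ I) ∪
       (Finset.univ.filter fun p : Fin n × Fin n => p.1 < p.2 ∧ p.1 ∈ I ∧ p.2 ∈ (I ∪ J)ᶜ))
      (Finset.univ.filter fun p : Fin n × Fin n => p.1 < p.2 ∧ p.1 ∈ (I ∪ J)ᶜ ∧ p.2 ∈ I) := by
    rw [Finset.disjoint_left]
    rintro p hp1 hp2
    simp only [Finset.mem_union, Finset.mem_filter, Finset.mem_univ, true_and,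
      Finset.mem_compl] at hp1 hp2
    rcases hp1 with h | h <;> tauto
  rw [e, Finset.card_union_of_disjoint d2, Finset.card_union_of_disjoint d1,
    pair_count, pair_count, pair_count]

lemma len_formula_elems (hdisj : Disjoint I J) (hcard : I.card + J.card = k) (hkn : k ≤ n) :
    (len (wIJ k I J) : ℤ) = (∑ x ∈ I, (2 * (n : ℤ) - k - (x : ℕ)))
      + ∑ x ∈ J, (((x : ℕ) : ℤ) - rk J x - rk I x) := by
  classical
  rw [len_eq hdisj hcard hkn, Q2_card hdisj, Q3_card hdisj]
  rw [cnt_transpose ((I ∪ J)ᶜ) J, cnt_transpose ((I ∪ J)ᶜ) I]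
  -- now everything is: I.card + (ΣI cntIc + ΣJ rkC) + (ΣI cntI + ΣI cntC + ΣI rkC)
  have hJ : ∀ b ∈ J, (rk ((I ∪ J)ᶜ) b : ℤ) = ((b : ℕ) : ℤ) - rk J b - rk I b := by
    intro b _
    have := rk_split hdisj b
    push_cast
    omega
  have hI : ∀ a ∈ I, (1 : ℤ) + ((Iᶜ.filter fun b => a < b).card : ℤ)
      + ((I.filter fun b => a < b).card : ℤ)
      + ((((I ∪ J)ᶜ).filter fun b => a < b).card : ℤ)
      + (rk ((I ∪ J)ᶜ) a : ℤ) = 2 * (n : ℤ) - k - (a : ℕ) := by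
    intro a haI
    have haJ : a ∉ J := fun h => (Finset.disjoint_left.mp hdisj haI) h
    have h1 := count_split I a
    have h2 := count_split J a
    have h3 := cnt_univ_split a
    have h4 := filter_partition hdisj (fun b => a < b)
    have h5 := cnt_Ic_split I a
    have h6 := rk_split hdisj a
    rw [if_pos haI] at h1
    rw [if_neg haJ] at h2
    have hk : I.card + J.card = k := hcard
    push_cast
    omega
  calc (↑(I.card + ((∑ a ∈ I, (Iᶜ.filter fun b => a < b).card)
          + ∑ b ∈ J, rk ((I ∪ J)ᶜ) b)
        + ((∑ a ∈ I, (I.filter fun b => a < b).card)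
          + (∑ a ∈ I, (((I ∪ J)ᶜ).filter fun b => a < b).card)
          + ∑ b ∈ I, rk ((I ∪ J)ᶜ) b)) : ℤ)
      = (∑ a ∈ I, ((1 : ℤ) + ((Iᶜ.filter fun b => a < b).card : ℤ)
          + ((I.filter fun b => a < b).card : ℤ)
          + ((((I ∪ J)ᶜ).filter fun b => a < b).card : ℤ)
          + (rk ((I ∪ J)ᶜ) a : ℤ)))
        + ∑ b ∈ J, (rk ((I ∪ J)ᶜ) b : ℤ) := by
        push_cast
        rw [Finset.sum_add_distrib, Finset.sum_add_distrib, Finset.sum_add_distrib,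
          Finset.sum_add_distrib, Finset.sum_const]
        push_cast
        ring
    _ = (∑ x ∈ I, (2 * (n : ℤ) - k - (x : ℕ)))
        + ∑ x ∈ J, (((x : ℕ) : ℤ) - rk J x - rk I x) := by
        rw [Finset.sum_congr rfl hI, Finset.sum_congr rfl hJ]

end Main

section Fin2
variable {n : ℕ}

lemma elt_mono (S : Finset (Fin n)) {l l' : ℕ} (hl : l < S.card) (hl' : l' < S.card)
    (h : l ≤ l') : elt S l hl ≤ elt S l' hl' := by
  have := (S.orderIsoOfFin rfl).monotone (show (⟨l, hl⟩ : Fin S.card) ≤ ⟨l', hl'⟩ from h)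
  exact this

lemma rk_vanish {I J : Finset (Fin n)} {l : Fin J.card} (hl : (l : ℕ) < mIJ I J) :
    rk I (elt J (l : ℕ) l.isLt) = 0 := by
  classical
  have hmem := Finset.max'_mem
    (insert 0 ((Finset.Icc 1 J.card).filter
      (fun m => ∃ x ∈ J, rk J x + 1 = m ∧ ∀ i ∈ I, x < i)))
    (Finset.insert_nonempty _ _)
  rw [show (insert 0 ((Finset.Icc 1 J.card).filter
      (fun m => ∃ x ∈ J, rk J x + 1 = m ∧ ∀ i ∈ I, x < i))).max'
      (Finset.insert_nonempty _ _) = mIJ I J from rfl] at hmem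
  rcases Finset.mem_insert.mp hmem with h0 | hmem
  · omega
  rw [Finset.mem_filter] at hmem
  obtain ⟨hIcc, x, hxJ, hrk, hall⟩ := hmem
  have hle : elt J (l : ℕ) l.isLt ≤ x := by
    have hx : elt J (rk J x) (rk_lt_card J x hxJ) = x := elt_rk J x hxJ
    rw [← hx]
    exact elt_mono J l.isLt (rk_lt_card J x hxJ) (by omega)
  rw [rk, Finset.card_eq_zero, Finset.filter_eq_empty_iff]
  intro y hyI
  have := hall y hyI
  exact not_lt.mpr (le_of_lt (lt_of_le_of_lt hle this))

end Fin2

/-- the length formula for `w_{(I,J)}`. -/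

theorem length_formula
    (n k : ℕ) (hn : 3 ≤ n) (hk1 : 1 ≤ k) (hkn : k ≤ n)
    (I J : Finset (Fin n)) (hdisj : Disjoint I J) (hcard : I.card + J.card = k) :
    (len (wIJ k I J) : ℤ) =
      (∑ l : Fin I.card,
        (2 * (n : ℤ) - k - (((elt I (l : ℕ) l.isLt : Fin n) : ℕ) + 1 : ℕ) + 1))
      + (∑ l : Fin J.card,
        ((((elt J (l : ℕ) l.isLt : Fin n) : ℕ) + 1 : ℕ) - ((l : ℕ) + 1 : ℕ) : ℤ))
      - (∑ l ∈ Finset.univ.filter (fun l : Fin J.card => mIJ I J ≤ (l : ℕ)),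
          ((I.filter (fun i => i < elt J (l : ℕ) l.isLt)).card : ℤ)) := by
  classical
  have hS1 : (∑ l : Fin I.card,
      (2 * (n : ℤ) - k - (((elt I (l : ℕ) l.isLt : Fin n) : ℕ) + 1 : ℕ) + 1))
      = ∑ x ∈ I, (2 * (n : ℤ) - k - (x : ℕ)) := by
    rw [sum_elt I (fun x : Fin n => 2 * (n : ℤ) - k - (((x : ℕ) + 1 : ℕ) : ℤ) + 1)]
    exact Finset.sum_congr rfl fun x _ => by push_cast; ring
  have hS2 : (∑ l : Fin J.card,
      ((((elt J (l : ℕ) l.isLt : Fin n) : ℕ) + 1 : ℕ) - ((l : ℕ) + 1 : ℕ) : ℤ))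
      = ∑ x ∈ J, ((((x : ℕ) + 1 : ℕ) : ℤ) - ((rk J x + 1 : ℕ) : ℤ)) := by
    rw [← sum_elt J (fun x : Fin n => (((x : ℕ) + 1 : ℕ) : ℤ) - ((rk J x + 1 : ℕ) : ℤ))]
    exact Finset.sum_congr rfl fun l _ => by rw [rk_elt]
  have hS3 : (∑ l ∈ Finset.univ.filter (fun l : Fin J.card => mIJ I J ≤ (l : ℕ)),
      ((I.filter (fun i => i < elt J (l : ℕ) l.isLt)).card : ℤ))
      = ∑ x ∈ J, (rk I x : ℤ) := by
    rw [Finset.sum_subset (Finset.filter_subset _ Finset.univ)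
      (fun l _ hl => ?_)]
    · rw [← sum_elt J (fun x : Fin n => (rk I x : ℤ))]
      rfl
    · rw [Finset.mem_filter, not_and] at hl
      have hlt : (l : ℕ) < mIJ I J := by
        by_contra hc
        exact (hl (Finset.mem_univ l)) (by omega)
      rw [show (I.filter (fun i => i < elt J (l : ℕ) l.isLt)).card
          = rk I (elt J (l : ℕ) l.isLt) from rfl, rk_vanish hlt]
      norm_num
  rw [hS1, hS2, hS3, len_formula_elems hdisj hcard hkn, add_sub_assoc,
    ← Finset.sum_sub_distrib]
  congr 1
  exact Finset.sum_congr rfl fun x _ => by push_cast; ring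

end
end
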